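/- arXiv:1303.4532 — 16 statements merged into one kernel-verified Lean document; each statement's English description precedes it below -/
import Mathlib

section
/- (Lemma 1) Let ν be a probability distribution on S such that for each i with ν(A_i) > 0 and each s ∈ A_i, ν(s)/ν(A_i) = α_i(s). Then for every i with ν(A_i) > 0 and every j, the one-step conditional probability of moving from A_i into A_j equals P̃(A_i, A_j); that is, (∑_{s'∈A_i} ∑_{s∈A_j} ν(s') P(s', s)) / ν(A_i) = P̃(A_i, A_j). -/
open Finset Matrix Filter

theorem stmt_1 {S : Type*} [Fintype S] [DecidableEq S] [Nonempty S]
    {m : ℕ} (A : Fin m → Finset S)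
    (hpart : ∀ s : S, ∃! i : Fin m, s ∈ A i)
    (hne : ∀ i, (A i).Nonempty)
    (P : Matrix S S ℝ)
    (hP0 : ∀ s s' : S, 0 ≤ P s s')
    (hP1 : ∀ s : S, ∑ s' : S, P s s' = 1)
    (α : Fin m → S → ℝ)
    (hα0 : ∀ i, ∀ s : S, s ∉ A i → α i s = 0)
    (hαpos : ∀ i, ∀ s ∈ A i, 0 < α i s)
    (hα1 : ∀ i, ∑ s ∈ A i, α i s = 1)
    (Pt : Matrix (Fin m) (Fin m) ℝ)
    (hPt : ∀ i j : Fin m, ∀ s ∈ A j,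
      Pt i j = (∑ s' ∈ A i, α i s' * P s' s) / α j s)
    (ν : S → ℝ) (hν0 : ∀ s : S, 0 ≤ ν s) (hν1 : ∑ s : S, ν s = 1)
    (hνα : ∀ i : Fin m, 0 < ∑ s ∈ A i, ν s →
      ∀ s ∈ A i, ν s / (∑ s' ∈ A i, ν s') = α i s) :
    ∀ i : Fin m, 0 < ∑ s ∈ A i, ν s → ∀ j : Fin m,
      (∑ s' ∈ A i, ∑ s ∈ A j, ν s' * P s' s) / (∑ s ∈ A i, ν s) = Pt i j := by
  intro i hi j
  set νA := ∑ s ∈ A i, ν s with hνA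
  have hν_eq : ∀ s ∈ A i, ν s = α i s * νA := by
    intro s hs
    have := hνα i hi s hs
    rw [← hνA, div_eq_iff (ne_of_gt hi)] at this
    linarith [this]
  have key : ∀ s ∈ A j, ∑ s' ∈ A i, α i s' * P s' s = Pt i j * α j s := by
    intro s hs
    have h := hPt i j s hs
    have hα : α j s ≠ 0 := ne_of_gt (hαpos j s hs)
    rw [h, div_mul_cancel₀ _ hα]
  have hnum : (∑ s' ∈ A i, ∑ s ∈ A j, ν s' * P s' s)
      = νA * (Pt i j) := by
    calc ∑ s' ∈ A i, ∑ s ∈ A j, ν s' * P s' s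
        = ∑ s ∈ A j, ∑ s' ∈ A i, ν s' * P s' s := Finset.sum_comm
      _ = ∑ s ∈ A j, νA * (∑ s' ∈ A i, α i s' * P s' s) := by
          refine Finset.sum_congr rfl fun s hs => ?_
          rw [Finset.mul_sum]
          refine Finset.sum_congr rfl fun s' hs' => ?_
          rw [hν_eq s' hs']; ring
      _ = ∑ s ∈ A j, νA * (Pt i j * α j s) := by
          refine Finset.sum_congr rfl fun s hs => ?_
          rw [key s hs]
      _ = νA * Pt i j * ∑ s ∈ A j, α j s := by
          rw [Finset.mul_sum]; refine Finset.sum_congr rfl fun s _ => ?_; ring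
      _ = νA * Pt i j := by rw [hα1 j, mul_one]
  rw [hnum, mul_comm, mul_div_assoc, div_self (ne_of_gt hi), mul_one]
end

section
/- (Lemma 2) Let π be a probability distribution on S that respects {α_i}, and assume πP^n(A_i) > 0 for all n and i. Then for every n ≥ 0, every i, and every s ∈ A_i, the conditional distribution of the chain at time n given it lies in A_i equals α_i: (πP^n)(s) / (πP^n)(A_i) = α_i(s). -/
open Finset Matrix Filter

theorem stmt_2 {S : Type*} [Fintype S] [DecidableEq S] [Nonempty S]
    {m : ℕ} (A : Fin m → Finset S)
    (hpart : ∀ s : S, ∃! i : Fin m, s ∈ A i)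
    (hne : ∀ i, (A i).Nonempty)
    (P : Matrix S S ℝ)
    (hP0 : ∀ s s' : S, 0 ≤ P s s')
    (hP1 : ∀ s : S, ∑ s' : S, P s s' = 1)
    (α : Fin m → S → ℝ)
    (hα0 : ∀ i, ∀ s : S, s ∉ A i → α i s = 0)
    (hαpos : ∀ i, ∀ s ∈ A i, 0 < α i s)
    (hα1 : ∀ i, ∑ s ∈ A i, α i s = 1)
    (Pt : Matrix (Fin m) (Fin m) ℝ)
    (hPt : ∀ i j : Fin m, ∀ s ∈ A j,
      Pt i j = (∑ s' ∈ A i, α i s' * P s' s) / α j s)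
    (π : S → ℝ) (hπ0 : ∀ s : S, 0 ≤ π s) (hπ1 : ∑ s : S, π s = 1)
    (hresp : ∀ i : Fin m, ∀ s ∈ A i, π s = α i s * ∑ s' ∈ A i, π s')
    (hpos : ∀ (n : ℕ) (i : Fin m), 0 < ∑ s ∈ A i, Matrix.vecMul π (P ^ n) s) :
    ∀ (n : ℕ) (i : Fin m), ∀ s ∈ A i,
      Matrix.vecMul π (P ^ n) s / (∑ s' ∈ A i, Matrix.vecMul π (P ^ n) s') = α i s := by
  -- splitting sums over S into sums over the parts
  have huniv : (Finset.univ : Finset S) = (Finset.univ : Finset (Fin m)).biUnion A := by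
    ext s
    simp only [Finset.mem_univ, Finset.mem_biUnion, true_iff, true_and]
    exact ⟨(hpart s).choose, (hpart s).choose_spec.1⟩
  have hdisj : ∀ i ∈ (Finset.univ : Finset (Fin m)), ∀ j ∈ Finset.univ, i ≠ j →
      Disjoint (A i) (A j) := by
    intro i _ j _ hij
    refine Finset.disjoint_left.2 fun s hsi hsj => hij ?_
    obtain ⟨k, _, huniq⟩ := hpart s
    rw [huniq i hsi, huniq j hsj]
  have hsplit : ∀ f : S → ℝ, ∑ s' : S, f s' = ∑ i : Fin m, ∑ s' ∈ A i, f s' := by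
    intro f
    rw [huniv, Finset.sum_biUnion hdisj]
  have key : ∀ n : ℕ, ∀ i : Fin m, ∀ s ∈ A i,
      Matrix.vecMul π (P ^ n) s = α i s * ∑ s' ∈ A i, Matrix.vecMul π (P ^ n) s' := by
    intro n
    induction n with
    | zero => simpa [Matrix.vecMul_one] using hresp
    | succ n ih =>
      have hstep : Matrix.vecMul π (P ^ (n + 1)) = Matrix.vecMul (Matrix.vecMul π (P ^ n)) P := by
        rw [pow_succ, ← Matrix.vecMul_vecMul]
      set q := Matrix.vecMul π (P ^ n) with hq
      intro j s hs
      -- compute (q ⬝ P) s for any s ∈ A j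
      have hform : ∀ s ∈ A j, Matrix.vecMul q P s = α j s * ∑ i : Fin m,
          (∑ s' ∈ A i, q s') * Pt i j := by
        intro s hs
        have : Matrix.vecMul q P s = ∑ s' : S, q s' * P s' s := by
          simp [Matrix.vecMul, dotProduct]
        rw [this, hsplit fun s' => q s' * P s' s]
        have hterm : ∀ i : Fin m, ∑ s' ∈ A i, q s' * P s' s =
            (∑ s' ∈ A i, q s') * Pt i j * α j s := by
          intro i
          have h1 : ∑ s' ∈ A i, q s' * P s' s =
              (∑ s' ∈ A i, q s') * (∑ s' ∈ A i, α i s' * P s' s) / 1 := by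
            rw [div_one]
            rw [Finset.mul_sum]
            -- LHS: ∑ q s' * P s' s with q s' = α i s' * (∑ q)
            rw [Finset.sum_congr rfl fun s' hs' => by rw [ih i s' hs']]
            apply Finset.sum_congr rfl
            intro s' _
            ring
          have h2 : (∑ s' ∈ A i, α i s' * P s' s) = Pt i j * α j s := by
            have := hPt i j s hs
            have hα := (hαpos j s hs).ne'
            field_simp at this
            linarith [this]
          rw [h1, div_one, h2]
          ring
        rw [Finset.sum_congr rfl fun i _ => hterm i]
        rw [← Finset.sum_mul]
        ring
      -- sum over A j
      have hsum : ∑ s' ∈ A j, Matrix.vecMul q P s' =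
          ∑ i : Fin m, (∑ s' ∈ A i, q s') * Pt i j := by
        rw [Finset.sum_congr rfl fun s' hs' => hform s' hs']
        rw [← Finset.sum_mul, hα1 j, one_mul]
      rw [hstep, hform s hs, hsum]
  intro n i s hs
  rw [key n i s hs, mul_div_assoc, div_self (hpos n i).ne', mul_one]
end

section
/- (Lumpability) Assume condition (Cond1) holds and the initial distribution π respects {α_i}. Let π̃ be the induced distribution on {A_1,…,A_m}, π̃(A_i) = π(A_i). Then for all n ≥ 0 and all i, (π̃ P̃^n)(A_i) = (π P^n)(A_i); i.e. the aggregated chain with transition matrix P̃ started at π̃ has the same distribution over the partition classes as the original chain. -/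
open Finset Matrix Filter

theorem stmt_3 {S : Type*} [Fintype S] [DecidableEq S] [Nonempty S]
    {m : ℕ} (A : Fin m → Finset S)
    (hpart : ∀ s : S, ∃! i : Fin m, s ∈ A i)
    (hne : ∀ i, (A i).Nonempty)
    (P : Matrix S S ℝ)
    (hP0 : ∀ s s' : S, 0 ≤ P s s')
    (hP1 : ∀ s : S, ∑ s' : S, P s s' = 1)
    (α : Fin m → S → ℝ)
    (hα0 : ∀ i, ∀ s : S, s ∉ A i → α i s = 0)
    (hαpos : ∀ i, ∀ s ∈ A i, 0 < α i s)
    (hα1 : ∀ i, ∑ s ∈ A i, α i s = 1)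
    (Pt : Matrix (Fin m) (Fin m) ℝ)
    (hPt : ∀ i j : Fin m, ∀ s ∈ A j,
      Pt i j = (∑ s' ∈ A i, α i s' * P s' s) / α j s)
    (π : S → ℝ) (hπ0 : ∀ s : S, 0 ≤ π s) (hπ1 : ∑ s : S, π s = 1)
    (hresp : ∀ i : Fin m, ∀ s ∈ A i, π s = α i s * ∑ s' ∈ A i, π s') :
    ∀ (n : ℕ) (i : Fin m),
      Matrix.vecMul (fun i' => ∑ s ∈ A i', π s) (Pt ^ n) i
        = ∑ s ∈ A i, Matrix.vecMul π (P ^ n) s := by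
  -- sum over S decomposes into sums over the partition classes
  have hsum : ∀ f : S → ℝ, ∑ s : S, f s = ∑ i : Fin m, ∑ s ∈ A i, f s := by
    intro f
    rw [← Finset.sum_biUnion]
    · congr 1
      symm
      apply Finset.eq_univ_of_forall
      intro s
      obtain ⟨i, hi, -⟩ := hpart s
      exact Finset.mem_biUnion.2 ⟨i, Finset.mem_univ i, hi⟩
    · intro i _ j _ hij
      refine Finset.disjoint_left.2 fun s hsi hsj => hij ?_
      obtain ⟨k, -, hu⟩ := hpart s
      rw [hu i hsi, hu j hsj]
  -- key invariant
  have key : ∀ n : ℕ, ∀ j : Fin m, ∀ s ∈ A j,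
      Matrix.vecMul π (P ^ n) s
        = α j s * Matrix.vecMul (fun i' => ∑ s ∈ A i', π s) (Pt ^ n) j := by
    intro n
    induction n with
    | zero =>
      intro j s hs
      simp only [pow_zero, Matrix.vecMul_one]
      exact hresp j s hs
    | succ n ih =>
      intro j s hs
      have hstep : ∀ i : Fin m, ∑ s' ∈ A i, α i s' * P s' s = Pt i j * α j s := by
        intro i
        rw [hPt i j s hs, div_mul_cancel₀]
        exact (hαpos j s hs).ne'
      calc Matrix.vecMul π (P ^ (n + 1)) s
          = ∑ s' : S, Matrix.vecMul π (P ^ n) s' * P s' s := by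
            rw [pow_succ, ← Matrix.vecMul_vecMul]
            rfl
        _ = ∑ i : Fin m, ∑ s' ∈ A i,
              (α i s' * Matrix.vecMul (fun i' => ∑ s ∈ A i', π s) (Pt ^ n) i) * P s' s := by
            rw [hsum fun s' => Matrix.vecMul π (P ^ n) s' * P s' s]
            exact Finset.sum_congr rfl fun i _ => Finset.sum_congr rfl fun s' hs' => by
              rw [ih i s' hs']
        _ = ∑ i : Fin m, Matrix.vecMul (fun i' => ∑ s ∈ A i', π s) (Pt ^ n) i
              * (Pt i j * α j s) := by
            refine Finset.sum_congr rfl fun i _ => ?_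
            rw [← hstep i, Finset.mul_sum]
            exact Finset.sum_congr rfl fun s' _ => by ring
        _ = α j s * Matrix.vecMul (fun i' => ∑ s ∈ A i', π s) (Pt ^ (n + 1)) j := by
            rw [pow_succ, ← Matrix.vecMul_vecMul]
            show _ = α j s * ∑ i : Fin m,
              Matrix.vecMul (fun i' => ∑ s ∈ A i', π s) (Pt ^ n) i * Pt i j
            rw [Finset.mul_sum]
            exact Finset.sum_congr rfl fun i _ => by ring
  intro n i
  rw [Finset.sum_congr rfl fun s hs => key n i s hs, ← Finset.sum_mul, hα1, one_mul]
end

section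
/- (Invertibility) Assume condition (Cond1) holds and the initial distribution π respects {α_i}. Let π̃(A_i) = π(A_i). Then for all n ≥ 0, all i, and all s ∈ A_i, (π P^n)(s) = (π̃ P̃^n)(A_i) · α_i(s); i.e. the distribution of the original chain at any time can be recovered from the distribution of the aggregated chain via the measures α_i. -/
open Finset Matrix Filter

theorem stmt_4 {S : Type*} [Fintype S] [DecidableEq S] [Nonempty S]
    {m : ℕ} (A : Fin m → Finset S)
    (hpart : ∀ s : S, ∃! i : Fin m, s ∈ A i)
    (hne : ∀ i, (A i).Nonempty)
    (P : Matrix S S ℝ)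
    (hP0 : ∀ s s' : S, 0 ≤ P s s')
    (hP1 : ∀ s : S, ∑ s' : S, P s s' = 1)
    (α : Fin m → S → ℝ)
    (hα0 : ∀ i, ∀ s : S, s ∉ A i → α i s = 0)
    (hαpos : ∀ i, ∀ s ∈ A i, 0 < α i s)
    (hα1 : ∀ i, ∑ s ∈ A i, α i s = 1)
    (Pt : Matrix (Fin m) (Fin m) ℝ)
    (hPt : ∀ i j : Fin m, ∀ s ∈ A j,
      Pt i j = (∑ s' ∈ A i, α i s' * P s' s) / α j s)
    (π : S → ℝ) (hπ0 : ∀ s : S, 0 ≤ π s) (hπ1 : ∑ s : S, π s = 1)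
    (hresp : ∀ i : Fin m, ∀ s ∈ A i, π s = α i s * ∑ s' ∈ A i, π s') :
    ∀ (n : ℕ) (i : Fin m), ∀ s ∈ A i,
      Matrix.vecMul π (P ^ n) s
        = Matrix.vecMul (fun i' => ∑ s' ∈ A i', π s') (Pt ^ n) i * α i s := by
  classical
  choose ind hind huniq using hpart
  have hmem : ∀ (s : S) (i : Fin m), s ∈ A i ↔ ind s = i := by
    intro s i
    exact ⟨fun h => (huniq s i h).symm, fun h => h ▸ hind s⟩
  have hsplit : ∀ f : S → ℝ, ∑ s' : S, f s' = ∑ j : Fin m, ∑ s' ∈ A j, f s' := by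
    intro f
    rw [← Finset.sum_fiberwise Finset.univ ind f]
    refine Finset.sum_congr rfl fun j _ => Finset.sum_congr ?_ (fun _ _ => rfl)
    ext s; simp [hmem s j]
  intro n
  induction n with
  | zero =>
    intro i s hs
    simp only [pow_zero, Matrix.vecMul_one]
    rw [hresp i s hs]; ring
  | succ n ih =>
    intro i s hs
    rw [pow_succ, ← Matrix.vecMul_vecMul, pow_succ, ← Matrix.vecMul_vecMul]
    set v := Matrix.vecMul π (P ^ n) with hv
    set V := Matrix.vecMul (fun i' => ∑ s' ∈ A i', π s') (Pt ^ n) with hV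
    have h1 : Matrix.vecMul v P s = ∑ s' : S, v s' * P s' s := rfl
    have h2 : Matrix.vecMul V Pt i = ∑ j : Fin m, V j * Pt j i := rfl
    rw [h1, h2, hsplit (fun s' => v s' * P s' s), Finset.sum_mul]
    refine Finset.sum_congr rfl fun j _ => ?_
    have hblock : ∑ s' ∈ A j, v s' * P s' s = V j * ∑ s' ∈ A j, α j s' * P s' s := by
      rw [Finset.mul_sum]
      refine Finset.sum_congr rfl fun s' hs' => ?_
      rw [ih j s' hs']; ring
    rw [hblock, hPt j i s hs]
    have hpos := (hαpos i s hs).ne'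
    field_simp
end

section
/- Assume condition (Cond1) holds. Then for every n ≥ 1, every i, j, and every s ∈ A_j, the n-step transition probabilities satisfy P̃^n(A_i, A_j) = (∑_{s'∈A_i} α_i(s') P^n(s', s)) / α_j(s). -/
open Finset Matrix Filter

theorem stmt_5 {S : Type*} [Fintype S] [DecidableEq S] [Nonempty S]
    {m : ℕ} (A : Fin m → Finset S)
    (hpart : ∀ s : S, ∃! i : Fin m, s ∈ A i)
    (hne : ∀ i, (A i).Nonempty)
    (P : Matrix S S ℝ)
    (hP0 : ∀ s s' : S, 0 ≤ P s s')
    (hP1 : ∀ s : S, ∑ s' : S, P s s' = 1)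
    (α : Fin m → S → ℝ)
    (hα0 : ∀ i, ∀ s : S, s ∉ A i → α i s = 0)
    (hαpos : ∀ i, ∀ s ∈ A i, 0 < α i s)
    (hα1 : ∀ i, ∑ s ∈ A i, α i s = 1)
    (Pt : Matrix (Fin m) (Fin m) ℝ)
    (hPt : ∀ i j : Fin m, ∀ s ∈ A j,
      Pt i j = (∑ s' ∈ A i, α i s' * P s' s) / α j s) :
    ∀ n : ℕ, 1 ≤ n → ∀ i j : Fin m, ∀ s ∈ A j,
      (Pt ^ n) i j = (∑ s' ∈ A i, α i s' * (P ^ n) s' s) / α j s := by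
  have hsum : ∀ g : S → ℝ, ∑ t : S, g t = ∑ k : Fin m, ∑ t ∈ A k, g t := by
    intro g
    have huniv : (Finset.univ : Finset S) = Finset.univ.biUnion A := by
      ext s
      simp only [Finset.mem_univ, Finset.mem_biUnion, true_iff, true_and]
      obtain ⟨i, hi, _⟩ := hpart s
      exact ⟨i, hi⟩
    rw [huniv, Finset.sum_biUnion]
    intro x _ y _ hxy
    exact Finset.disjoint_left.mpr fun a ha hay => hxy ((hpart a).unique ha hay)
  intro n hn
  induction n, hn using Nat.le_induction with
  | base => intro i j s hs; simpa [pow_one] using hPt i j s hs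
  | succ n hn ih =>
    intro i j s hs
    have hαs := hαpos j s hs
    have key : ∑ s' ∈ A i, α i s' * (P ^ (n + 1)) s' s
        = α j s * (Pt ^ (n + 1)) i j := by
      have hexp : ∀ s', (P ^ (n + 1)) s' s = ∑ t : S, (P ^ n) s' t * P t s := by
        intro s'; rw [pow_succ, Matrix.mul_apply]
      simp_rw [hexp, Finset.mul_sum]
      rw [Finset.sum_comm]
      rw [hsum (fun t => ∑ s' ∈ A i, α i s' * ((P ^ n) s' t * P t s))]
      have hinner : ∀ k : Fin m, ∀ t ∈ A k,
          ∑ s' ∈ A i, α i s' * ((P ^ n) s' t * P t s)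
          = (Pt ^ n) i k * (α k t * P t s) := by
        intro k t ht
        have hαt := hαpos k t ht
        have h2 : ∑ s' ∈ A i, α i s' * (P ^ n) s' t = (Pt ^ n) i k * α k t := by
          rw [ih i k t ht]; field_simp
        calc ∑ s' ∈ A i, α i s' * ((P ^ n) s' t * P t s)
            = (∑ s' ∈ A i, α i s' * (P ^ n) s' t) * P t s := by
              rw [Finset.sum_mul]; exact Finset.sum_congr rfl fun s' _ => by ring
          _ = (Pt ^ n) i k * (α k t * P t s) := by rw [h2]; ring
      have hblock : ∀ k : Fin m,
          ∑ t ∈ A k, ∑ s' ∈ A i, α i s' * ((P ^ n) s' t * P t s)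
          = (Pt ^ n) i k * (Pt k j * α j s) := by
        intro k
        rw [Finset.sum_congr rfl (hinner k), ← Finset.mul_sum]
        congr 1
        rw [hPt k j s hs]; field_simp
      rw [Finset.sum_congr rfl fun k _ => hblock k]
      rw [pow_succ, Matrix.mul_apply, Finset.mul_sum]
      exact Finset.sum_congr rfl fun k _ => by ring
    rw [key, mul_div_cancel_left₀ _ (ne_of_gt hαs)]
end

section
/- Assume condition (Cond1) holds. Then for every n ≥ 1, every s ∈ A_i and s' ∈ A_j, P̃^n(A_i, A_j) ≥ (α_i(s)/α_j(s')) · P^n(s, s'). In particular, if P^n(s, s') > 0 for some s ∈ A_i, s' ∈ A_j, then P̃^n(A_i, A_j) > 0. -/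
open Finset Matrix Filter

theorem stmt_6 {S : Type*} [Fintype S] [DecidableEq S] [Nonempty S]
    {m : ℕ} (A : Fin m → Finset S)
    (hpart : ∀ s : S, ∃! i : Fin m, s ∈ A i)
    (hne : ∀ i, (A i).Nonempty)
    (P : Matrix S S ℝ)
    (hP0 : ∀ s s' : S, 0 ≤ P s s')
    (hP1 : ∀ s : S, ∑ s' : S, P s s' = 1)
    (α : Fin m → S → ℝ)
    (hα0 : ∀ i, ∀ s : S, s ∉ A i → α i s = 0)
    (hαpos : ∀ i, ∀ s ∈ A i, 0 < α i s)
    (hα1 : ∀ i, ∑ s ∈ A i, α i s = 1)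
    (Pt : Matrix (Fin m) (Fin m) ℝ)
    (hPt : ∀ i j : Fin m, ∀ s ∈ A j,
      Pt i j = (∑ s' ∈ A i, α i s' * P s' s) / α j s) :
    ∀ n : ℕ, 1 ≤ n → ∀ i j : Fin m, ∀ s ∈ A i, ∀ s' ∈ A j,
      (α i s / α j s') * (P ^ n) s s' ≤ (Pt ^ n) i j ∧
        (0 < (P ^ n) s s' → 0 < (Pt ^ n) i j) := by
  -- nonnegativity of entries of P^n
  have hPn0 : ∀ n, ∀ s s' : S, 0 ≤ (P ^ n) s s' := by
    intro n
    induction n with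
    | zero =>
        intro s s'
        simp only [pow_zero, Matrix.one_apply]
        split <;> norm_num
    | succ n ih =>
        intro s s'
        rw [pow_succ, Matrix.mul_apply]
        exact Finset.sum_nonneg fun t _ => mul_nonneg (ih s t) (hP0 t s')
  -- splitting a sum over S along the partition
  have hsplit : ∀ f : S → ℝ, (∑ t : S, f t) = ∑ k : Fin m, ∑ t ∈ A k, f t := by
    intro f
    have hdisj : ∀ k ∈ (Finset.univ : Finset (Fin m)), ∀ l ∈ (Finset.univ : Finset (Fin m)),
        k ≠ l → Disjoint (A k) (A l) := by
      intro k _ l _ hkl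
      refine Finset.disjoint_left.mpr fun t htk htl => hkl ?_
      obtain ⟨u, _, hu⟩ := hpart t
      exact (hu k htk).trans (hu l htl).symm
    have hcover : (Finset.univ : Finset (Fin m)).biUnion A = Finset.univ := by
      apply Finset.eq_univ_of_forall
      intro t
      obtain ⟨u, hu, _⟩ := hpart t
      exact Finset.mem_biUnion.mpr ⟨u, Finset.mem_univ u, hu⟩
    rw [← hcover, Finset.sum_biUnion hdisj]
  -- key identity
  have key : ∀ n, ∀ i j : Fin m, ∀ s' ∈ A j,
      (∑ s ∈ A i, α i s * (P ^ n) s s') = α j s' * (Pt ^ n) i j := by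
    intro n
    induction n with
    | zero =>
        intro i j s' hs'
        simp only [pow_zero, Matrix.one_apply, mul_ite, mul_one, mul_zero]
        rw [Finset.sum_ite_eq' (A i) s' (α i)]
        by_cases hij : i = j
        · subst hij
          simp [hs']
        · have hs'i : s' ∉ A i := by
            intro h
            obtain ⟨u, _, hu⟩ := hpart s'
            exact hij ((hu i h).trans (hu j hs').symm)
          simp [hs'i, Matrix.one_apply, hij]
    | succ n ih =>
        intro i j s' hs'
        have expand : ∀ s : S, (P ^ (n + 1)) s s' = ∑ t : S, (P ^ n) s t * P t s' := by
          intro s; rw [pow_succ, Matrix.mul_apply]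
        calc (∑ s ∈ A i, α i s * (P ^ (n + 1)) s s')
            = ∑ t : S, ∑ s ∈ A i, α i s * ((P ^ n) s t * P t s') := by
              rw [Finset.sum_comm]
              exact Finset.sum_congr rfl fun s _ => by
                rw [expand s, Finset.mul_sum]
          _ = ∑ k : Fin m, ∑ t ∈ A k, (∑ s ∈ A i, α i s * (P ^ n) s t) * P t s' := by
              rw [hsplit fun t => ∑ s ∈ A i, α i s * ((P ^ n) s t * P t s')]
              refine Finset.sum_congr rfl fun k _ => Finset.sum_congr rfl fun t _ => ?_
              rw [Finset.sum_mul]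
              exact Finset.sum_congr rfl fun s _ => (mul_assoc _ _ _).symm
          _ = ∑ k : Fin m, (Pt ^ n) i k * ∑ t ∈ A k, α k t * P t s' := by
              refine Finset.sum_congr rfl fun k _ => ?_
              rw [Finset.mul_sum]
              refine Finset.sum_congr rfl fun t ht => ?_
              rw [ih i k t ht]; ring
          _ = ∑ k : Fin m, (Pt ^ n) i k * (α j s' * Pt k j) := by
              refine Finset.sum_congr rfl fun k _ => ?_
              have hαj := (hαpos j s' hs').ne'
              congr 1
              rw [hPt k j s' hs']
              field_simp
          _ = α j s' * (Pt ^ (n + 1)) i j := by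
              rw [pow_succ, Matrix.mul_apply, Finset.mul_sum]
              exact Finset.sum_congr rfl fun k _ => by ring
  -- conclusion
  intro n _ i j s hs s' hs'
  have hkey := key n i j s' hs'
  have h1 : α i s * (P ^ n) s s' ≤ α j s' * (Pt ^ n) i j := by
    rw [← hkey]
    exact Finset.single_le_sum
      (fun t ht => mul_nonneg (hαpos i t ht).le (hPn0 n t s')) hs
  have hαj := hαpos j s' hs'
  constructor
  · rw [div_mul_eq_mul_div, div_le_iff₀ hαj]
    nlinarith
  · intro hpos
    have h2 : 0 < α j s' * (Pt ^ n) i j :=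
      lt_of_lt_of_le (mul_pos (hαpos i s hs) hpos) h1
    nlinarith
end

section
/- Assume condition (Cond1) holds. If P is irreducible (for all s, s' ∈ S there exists n ≥ 0 with P^n(s, s') > 0), then P̃ is irreducible (for all i, j there exists n ≥ 0 with P̃^n(A_i, A_j) > 0). -/
open Finset Matrix Filter

theorem stmt_7 {S : Type*} [Fintype S] [DecidableEq S] [Nonempty S]
    {m : ℕ} (A : Fin m → Finset S)
    (hpart : ∀ s : S, ∃! i : Fin m, s ∈ A i)
    (hne : ∀ i, (A i).Nonempty)
    (P : Matrix S S ℝ)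
    (hP0 : ∀ s s' : S, 0 ≤ P s s')
    (hP1 : ∀ s : S, ∑ s' : S, P s s' = 1)
    (α : Fin m → S → ℝ)
    (hα0 : ∀ i, ∀ s : S, s ∉ A i → α i s = 0)
    (hαpos : ∀ i, ∀ s ∈ A i, 0 < α i s)
    (hα1 : ∀ i, ∑ s ∈ A i, α i s = 1)
    (Pt : Matrix (Fin m) (Fin m) ℝ)
    (hPt : ∀ i j : Fin m, ∀ s ∈ A j,
      Pt i j = (∑ s' ∈ A i, α i s' * P s' s) / α j s)
    (hirr : ∀ s s' : S, ∃ n : ℕ, 0 < (P ^ n) s s') :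
    ∀ i j : Fin m, ∃ n : ℕ, 0 < (Pt ^ n) i j := by
  have hPn0 : ∀ n, ∀ s s' : S, 0 ≤ (P ^ n) s s' := by
    intro n
    induction n with
    | zero =>
      intro s s'
      simp only [pow_zero, Matrix.one_apply]
      split <;> norm_num
    | succ n ih =>
      intro s s'
      rw [pow_succ, Matrix.mul_apply]
      exact Finset.sum_nonneg fun t _ => mul_nonneg (ih s t) (hP0 t s')
  have hdisj : ∀ i j : Fin m, i ≠ j → Disjoint (A i) (A j) := by
    intro i j hij
    rw [Finset.disjoint_left]
    intro s hsi hsj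
    exact hij ((hpart s).unique hsi hsj)
  have hcover : ∀ f : S → ℝ, ∑ t : S, f t = ∑ k : Fin m, ∑ t ∈ A k, f t := by
    intro f
    have hU : (Finset.univ : Finset (Fin m)).biUnion A = Finset.univ := by
      ext s
      simp only [Finset.mem_biUnion, Finset.mem_univ, iff_true, true_and]
      exact (hpart s).exists
    rw [← hU, Finset.sum_biUnion]
    intro i _ j _ hij
    exact hdisj i j hij
  have key : ∀ n, ∀ i j : Fin m, ∀ s ∈ A j,
      (Pt ^ n) i j = (∑ s' ∈ A i, α i s' * (P ^ n) s' s) / α j s := by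
    intro n
    induction n with
    | zero =>
      intro i j s hs
      by_cases hij : i = j
      · subst hij
        simp only [pow_zero, Matrix.one_apply_eq]
        have h1 : ∑ s' ∈ A i, α i s' * (1 : Matrix S S ℝ) s' s = α i s := by
          rw [Finset.sum_eq_single s]
          · simp [Matrix.one_apply]
          · intro b _ hbs; simp [Matrix.one_apply, hbs]
          · intro h; exact absurd hs h
        rw [h1, div_self (ne_of_gt (hαpos i s hs))]
      · have h0 : ∀ s' ∈ A i, α i s' * (1 : Matrix S S ℝ) s' s = 0 := by
          intro s' hs'
          have hne' : s' ≠ s := fun h => hij ((hpart s).unique (h ▸ hs') hs)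
          simp [Matrix.one_apply, hne']
        simp only [pow_zero]
        rw [Matrix.one_apply_ne hij, Finset.sum_eq_zero h0, zero_div]
    | succ n ih =>
      intro i j s hs
      rw [pow_succ, Matrix.mul_apply]
      have hstep : ∀ k, (Pt ^ n) i k * Pt k j
          = (∑ t ∈ A k, ∑ s' ∈ A i, α i s' * (P ^ n) s' t * P t s) / α j s := by
        intro k
        rw [hPt k j s hs, ← mul_div_assoc, Finset.mul_sum]
        congr 1
        apply Finset.sum_congr rfl
        intro t ht
        rw [ih i k t ht]
        have hαt : α k t ≠ 0 := (hαpos k t ht).ne'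
        have h2 : (∑ s' ∈ A i, α i s' * (P ^ n) s' t) / α k t * (α k t * P t s)
            = (∑ s' ∈ A i, α i s' * (P ^ n) s' t) * P t s := by
          field_simp
        rw [h2, Finset.sum_mul]
      calc ∑ k, (Pt ^ n) i k * Pt k j
          = ∑ k, (∑ t ∈ A k, ∑ s' ∈ A i, α i s' * (P ^ n) s' t * P t s) / α j s :=
            Finset.sum_congr rfl fun k _ => hstep k
        _ = (∑ k, ∑ t ∈ A k, ∑ s' ∈ A i, α i s' * (P ^ n) s' t * P t s) / α j s := by
            rw [Finset.sum_div]
        _ = (∑ t : S, ∑ s' ∈ A i, α i s' * (P ^ n) s' t * P t s) / α j s := by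
            rw [hcover]
        _ = (∑ s' ∈ A i, α i s' * (P ^ (n + 1)) s' s) / α j s := by
            rw [Finset.sum_comm]
            congr 1
            apply Finset.sum_congr rfl
            intro s' _
            rw [pow_succ, Matrix.mul_apply, Finset.mul_sum]
            apply Finset.sum_congr rfl
            intro t _
            ring
  intro i j
  obtain ⟨si, hsi⟩ := hne i
  obtain ⟨sj, hsj⟩ := hne j
  obtain ⟨n, hn⟩ := hirr si sj
  refine ⟨n, ?_⟩
  rw [key n i j sj hsj]
  apply div_pos
  · exact Finset.sum_pos' (fun s' hs' => mul_nonneg (hαpos i s' hs').le (hPn0 n s' sj))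
      ⟨si, hsi, mul_pos (hαpos i si hsi) hn⟩
  · exact hαpos j sj hsj
end

section
/- Assume condition (Cond1) holds. If a state s ∈ A_i is recurrent for P in the sense that the series ∑_{n≥1} P^n(s, s) diverges, then A_i is recurrent for P̃, i.e. the series ∑_{n≥1} P̃^n(A_i, A_i) diverges. -/
open Finset Matrix Filter

theorem stmt_8 {S : Type*} [Fintype S] [DecidableEq S] [Nonempty S]
    {m : ℕ} (A : Fin m → Finset S)
    (hpart : ∀ s : S, ∃! i : Fin m, s ∈ A i)
    (hne : ∀ i, (A i).Nonempty)
    (P : Matrix S S ℝ)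
    (hP0 : ∀ s s' : S, 0 ≤ P s s')
    (hP1 : ∀ s : S, ∑ s' : S, P s s' = 1)
    (α : Fin m → S → ℝ)
    (hα0 : ∀ i, ∀ s : S, s ∉ A i → α i s = 0)
    (hαpos : ∀ i, ∀ s ∈ A i, 0 < α i s)
    (hα1 : ∀ i, ∑ s ∈ A i, α i s = 1)
    (Pt : Matrix (Fin m) (Fin m) ℝ)
    (hPt : ∀ i j : Fin m, ∀ s ∈ A j,
      Pt i j = (∑ s' ∈ A i, α i s' * P s' s) / α j s)
    (i : Fin m) (s : S) (hs : s ∈ A i)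
    (hrec : ¬ Summable (fun n : ℕ => (P ^ (n + 1)) s s)) :
    ¬ Summable (fun n : ℕ => (Pt ^ (n + 1)) i i) := by
  classical
  -- index function of the partition
  set idx : S → Fin m := fun t => (hpart t).choose with hidx
  have hmem : ∀ t : S, t ∈ A (idx t) := fun t => (hpart t).choose_spec.1
  have huniq : ∀ t : S, ∀ j, t ∈ A j → j = idx t := fun t j h =>
    (hpart t).choose_spec.2 j h
  -- partition sum
  have hsplit : ∀ F : S → ℝ, ∑ t : S, F t = ∑ j : Fin m, ∑ t ∈ A j, F t := by
    intro F
    rw [← Finset.sum_fiberwise Finset.univ idx F]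
    refine Finset.sum_congr rfl fun j _ => ?_
    refine Finset.sum_congr ?_ fun _ _ => rfl
    ext t
    simp only [Finset.mem_filter, Finset.mem_univ, true_and]
    constructor
    · rintro rfl; exact hmem t
    · intro h; exact (huniq t j h).symm
  -- entries of powers of P are nonnegative
  have hpow0 : ∀ n : ℕ, ∀ t t' : S, 0 ≤ (P ^ n) t t' := by
    intro n
    induction n with
    | zero => intro t t'; simp [Matrix.one_apply]; positivity
    | succ n ih =>
      intro t t'
      rw [pow_succ, Matrix.mul_apply]
      exact Finset.sum_nonneg fun u _ => mul_nonneg (ih t u) (hP0 u t')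
  -- key lumping identity
  have key : ∀ n : ℕ, ∀ j : Fin m, ∀ t ∈ A j,
      ∑ s' ∈ A i, α i s' * (P ^ n) s' t = (Pt ^ n) i j * α j t := by
    intro n
    induction n with
    | zero =>
      intro j t ht
      simp only [pow_zero, Matrix.one_apply]
      by_cases hij : i = j
      · subst hij
        rw [if_pos rfl, one_mul]
        rw [Finset.sum_eq_single t (fun b _ hb => by simp [hb]) (fun h => (h ht).elim)]
        simp
      · rw [if_neg hij, zero_mul]
        have hts : t ∉ A i := fun h => hij ((huniq t i h).trans (huniq t j ht).symm)
        refine Finset.sum_eq_zero fun b hb => ?_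
        have : b ≠ t := fun e => hts (e ▸ hb)
        simp [this]
    | succ n ih =>
      intro j t ht
      have h1 : ∑ s' ∈ A i, α i s' * (P ^ (n + 1)) s' t
          = ∑ u : S, (∑ s' ∈ A i, α i s' * (P ^ n) s' u) * P u t := by
        simp only [pow_succ, Matrix.mul_apply, Finset.mul_sum, Finset.sum_mul]
        rw [Finset.sum_comm]
        exact Finset.sum_congr rfl fun u _ => Finset.sum_congr rfl fun v _ => by ring
      rw [h1, hsplit]
      have h2 : ∀ k : Fin m, ∑ u ∈ A k, (∑ s' ∈ A i, α i s' * (P ^ n) s' u) * P u t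
          = (Pt ^ n) i k * (Pt k j * α j t) := by
        intro k
        have : ∑ u ∈ A k, (∑ s' ∈ A i, α i s' * (P ^ n) s' u) * P u t
            = (Pt ^ n) i k * ∑ u ∈ A k, α k u * P u t := by
          rw [Finset.mul_sum]
          refine Finset.sum_congr rfl fun u hu => ?_
          rw [ih k u hu]; ring
        rw [this]
        congr 1
        have hαj : α j t ≠ 0 := (hαpos j t ht).ne'
        rw [hPt k j t ht, div_mul_cancel₀ _ hαj]
      calc ∑ k : Fin m, ∑ u ∈ A k, (∑ s' ∈ A i, α i s' * (P ^ n) s' u) * P u t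
          = ∑ k : Fin m, (Pt ^ n) i k * (Pt k j * α j t) := by
            exact Finset.sum_congr rfl fun k _ => h2 k
        _ = (∑ k : Fin m, (Pt ^ n) i k * Pt k j) * α j t := by
            rw [Finset.sum_mul]; exact Finset.sum_congr rfl fun k _ => by ring
        _ = (Pt ^ (n + 1)) i j * α j t := by rw [pow_succ, Matrix.mul_apply]
  -- comparison: (P^n) s s ≤ (Pt^n) i i
  have hle : ∀ n : ℕ, (P ^ n) s s ≤ (Pt ^ n) i i := by
    intro n
    have hk := key n i s hs
    have hαs : 0 < α i s := hαpos i s hs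
    have hsingle : α i s * (P ^ n) s s ≤ ∑ s' ∈ A i, α i s' * (P ^ n) s' s := by
      refine Finset.single_le_sum (f := fun s' => α i s' * (P ^ n) s' s) ?_ hs
      intro b hb
      exact mul_nonneg (hαpos i b hb).le (hpow0 n b s)
    rw [hk] at hsingle
    have := (mul_le_mul_iff_of_pos_right hαs).mp (by linarith [hsingle])
    nlinarith [hsingle, hαs]
  intro hsum
  exact hrec (Summable.of_nonneg_of_le (fun n => hpow0 (n + 1) s s)
    (fun n => hle (n + 1)) hsum)
end

section
/- Assume condition (Cond1) holds. If a state s ∈ A_i has period 1 for P, i.e. gcd{n ≥ 1 : P^n(s, s) > 0} = 1, then A_i has period 1 for P̃, i.e. gcd{n ≥ 1 : P̃^n(A_i, A_i) > 0} = 1. -/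
open Finset Matrix Filter

theorem stmt_9 {S : Type*} [Fintype S] [DecidableEq S] [Nonempty S]
    {m : ℕ} (A : Fin m → Finset S)
    (hpart : ∀ s : S, ∃! i : Fin m, s ∈ A i)
    (hne : ∀ i, (A i).Nonempty)
    (P : Matrix S S ℝ)
    (hP0 : ∀ s s' : S, 0 ≤ P s s')
    (hP1 : ∀ s : S, ∑ s' : S, P s s' = 1)
    (α : Fin m → S → ℝ)
    (hα0 : ∀ i, ∀ s : S, s ∉ A i → α i s = 0)
    (hαpos : ∀ i, ∀ s ∈ A i, 0 < α i s)
    (hα1 : ∀ i, ∑ s ∈ A i, α i s = 1)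
    (Pt : Matrix (Fin m) (Fin m) ℝ)
    (hPt : ∀ i j : Fin m, ∀ s ∈ A j,
      Pt i j = (∑ s' ∈ A i, α i s' * P s' s) / α j s)
    (i : Fin m) (s : S) (hs : s ∈ A i)
    (hper : ∀ d : ℕ, (∀ n : ℕ, 1 ≤ n → 0 < (P ^ n) s s → d ∣ n) → d = 1) :
    ∀ d : ℕ, (∀ n : ℕ, 1 ≤ n → 0 < (Pt ^ n) i i → d ∣ n) → d = 1 := by
  classical
  choose idx hmem huni using hpart
  have hAfilter : ∀ k : Fin m, A k = Finset.univ.filter (fun u => idx u = k) := by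
    intro k
    ext u
    simp only [Finset.mem_filter, Finset.mem_univ, true_and]
    constructor
    · intro hu; exact (huni u k hu).symm
    · intro hu; exact hu ▸ hmem u
  -- nonnegativity of powers of P
  have hPn0 : ∀ n : ℕ, ∀ u v : S, 0 ≤ (P ^ n) u v := by
    intro n
    induction n with
    | zero =>
      intro u v
      simp only [pow_zero, Matrix.one_apply]
      split <;> norm_num
    | succ n ih =>
      intro u v
      rw [pow_succ, Matrix.mul_apply]
      exact Finset.sum_nonneg fun t _ => mul_nonneg (ih u t) (hP0 t v)
  -- key identity
  have key : ∀ n : ℕ, ∀ j : Fin m, ∀ t ∈ A j,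
      ∑ s' ∈ A i, α i s' * (P ^ n) s' t = (Pt ^ n) i j * α j t := by
    intro n
    induction n with
    | zero =>
      intro j t ht
      simp only [pow_zero, Matrix.one_apply]
      have : ∑ s' ∈ A i, α i s' * (if s' = t then (1:ℝ) else 0)
          = ∑ s' ∈ A i, (if s' = t then α i s' else 0) := by
        apply Finset.sum_congr rfl
        intro u _
        split <;> simp
      rw [this, Finset.sum_ite_eq' (A i) t (fun u => α i u)]
      by_cases hij : i = j
      · subst hij
        simp [ht]
      · have hti : t ∉ A i := by
          intro hti
          exact hij ((huni t i hti).trans (huni t j ht).symm)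
        simp [hti, Ne.symm hij, hij]
    | succ n ih =>
      intro j t ht
      rw [pow_succ, pow_succ, Matrix.mul_apply]
      have step1 : ∑ s' ∈ A i, α i s' * ((P ^ n) * P) s' t
          = ∑ u : S, (∑ s' ∈ A i, α i s' * (P ^ n) s' u) * P u t := by
        simp_rw [Matrix.mul_apply, Finset.mul_sum, Finset.sum_mul]
        rw [Finset.sum_comm]
        apply Finset.sum_congr rfl
        intro u _
        apply Finset.sum_congr rfl
        intro v _
        ring
      rw [step1]
      have step2 : ∑ u : S, (∑ s' ∈ A i, α i s' * (P ^ n) s' u) * P u t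
          = ∑ k : Fin m, ∑ u ∈ A k, (∑ s' ∈ A i, α i s' * (P ^ n) s' u) * P u t := by
        rw [← Finset.sum_fiberwise Finset.univ idx
          (fun u => (∑ s' ∈ A i, α i s' * (P ^ n) s' u) * P u t)]
        apply Finset.sum_congr rfl
        intro k _
        rw [hAfilter k]
      rw [step2]
      have step3 : ∀ k : Fin m, ∑ u ∈ A k, (∑ s' ∈ A i, α i s' * (P ^ n) s' u) * P u t
          = (Pt ^ n) i k * (Pt k j * α j t) := by
        intro k
        have : ∀ u ∈ A k, (∑ s' ∈ A i, α i s' * (P ^ n) s' u) * P u t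
            = (Pt ^ n) i k * (α k u * P u t) := by
          intro u hu
          rw [ih k u hu]; ring
        rw [Finset.sum_congr rfl this, ← Finset.mul_sum]
        congr 1
        have hα : α j t ≠ 0 := ne_of_gt (hαpos j t ht)
        have := hPt k j t ht
        field_simp at this
        linarith [this]
      rw [Finset.sum_congr rfl (fun k _ => step3 k)]
      simp_rw [← mul_assoc]
      rw [← Finset.sum_mul]
  -- main argument
  intro d hd
  apply hper d
  intro n hn hpos
  apply hd n hn
  have hsum : 0 < ∑ s' ∈ A i, α i s' * (P ^ n) s' s := by
    have hle : α i s * (P ^ n) s s ≤ ∑ s' ∈ A i, α i s' * (P ^ n) s' s :=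
      Finset.single_le_sum (fun u _ => mul_nonneg (le_of_lt (hαpos i u ‹u ∈ A i›)) (hPn0 n u s)) hs
    exact lt_of_lt_of_le (mul_pos (hαpos i s hs) hpos) hle
  have hk := key n i s hs
  rw [hk] at hsum
  nlinarith [hαpos i s hs]
end

section
/- Assume condition (Cond1) holds, that μ is a stationary distribution of P that respects {α_i}, and let μ̃ be defined by μ̃(A_i) = μ(A_i). Then μ̃ is a stationary distribution for P̃, i.e. μ̃ P̃ = μ̃. Moreover, if P is irreducible, then P̃ is irreducible, so μ̃ is its unique stationary distribution. -/
open Finset Matrix Filter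

lemma stmt11_pow_nonneg {S : Type*} [Fintype S] (P : Matrix S S ℝ)
    (hP0 : ∀ s s', 0 ≤ P s s') [DecidableEq S] :
    ∀ n s s', 0 ≤ (P ^ n) s s' := by
  intro n
  induction n with
  | zero => intro s s'; simp [Matrix.one_apply]; positivity
  | succ n ih =>
      intro s s'
      rw [pow_succ, Matrix.mul_apply]
      exact Finset.sum_nonneg fun u _ => mul_nonneg (ih s u) (hP0 u s')

lemma stmt11_vecMul_pow {S : Type*} [Fintype S] [DecidableEq S]
    (P : Matrix S S ℝ) (μ : S → ℝ) (h : Matrix.vecMul μ P = μ) :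
    ∀ n, Matrix.vecMul μ (P ^ n) = μ := by
  intro n
  induction n with
  | zero => simp
  | succ n ih => rw [pow_succ, ← Matrix.vecMul_vecMul, ih, h]

lemma stmt11_vapply {S : Type*} [Fintype S] (v : S → ℝ) (M : Matrix S S ℝ) (s : S) :
    Matrix.vecMul v M s = ∑ u, v u * M u s := by
  simp [Matrix.vecMul, dotProduct]

lemma stmt11_unique {S : Type*} [Fintype S] [DecidableEq S] [Nonempty S]
    (P : Matrix S S ℝ)
    (hP0 : ∀ s s', 0 ≤ P s s')
    (hirr : ∀ s s', ∃ n, 0 < (P ^ n) s s')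
    (μ ν : S → ℝ)
    (hμ0 : ∀ s, 0 ≤ μ s) (hμ1 : ∑ s, μ s = 1) (hμ : Matrix.vecMul μ P = μ)
    (hν1 : ∑ s, ν s = 1) (hν : Matrix.vecMul ν P = ν) :
    ν = μ := by
  have hpownn := stmt11_pow_nonneg P hP0
  obtain ⟨s₁, hs₁⟩ : ∃ s, 0 < μ s := by
    by_contra h
    push_neg at h
    have : ∑ s : S, μ s = 0 :=
      Finset.sum_eq_zero fun s _ => le_antisymm (h s) (hμ0 s)
    rw [hμ1] at this; norm_num at this
  have hμpos : ∀ t, 0 < μ t := by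
    intro t
    obtain ⟨n, hn⟩ := hirr s₁ t
    have h1 : μ t = ∑ u, μ u * (P ^ n) u t := by
      conv_lhs => rw [← stmt11_vecMul_pow P μ hμ n]
      exact stmt11_vapply μ (P ^ n) t
    have h2 : μ s₁ * (P ^ n) s₁ t ≤ ∑ u, μ u * (P ^ n) u t :=
      Finset.single_le_sum (fun u _ => mul_nonneg (hμ0 u) (hpownn n u t)) (mem_univ s₁)
    have := mul_pos hs₁ hn
    linarith
  obtain ⟨s₀, -, hmin⟩ := Finset.exists_min_image Finset.univ (fun s => ν s / μ s)
    ⟨Classical.arbitrary S, mem_univ _⟩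
  set c := ν s₀ / μ s₀ with hc
  have hge : ∀ s, c * μ s ≤ ν s := by
    intro s
    have := hmin s (mem_univ s)
    rwa [le_div_iff₀ (hμpos s)] at this
  have hall : ∀ t, ν t = c * μ t := by
    intro t
    obtain ⟨n, hn⟩ := hirr t s₀
    have hνQ : ∑ u, ν u * (P ^ n) u s₀ = ν s₀ := by
      rw [← stmt11_vapply, stmt11_vecMul_pow P ν hν n]
    have hμQ : ∑ u, μ u * (P ^ n) u s₀ = μ s₀ := by
      rw [← stmt11_vapply, stmt11_vecMul_pow P μ hμ n]
    have hkey : ∑ u, c * μ u * (P ^ n) u s₀ = ∑ u, ν u * (P ^ n) u s₀ := by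
      rw [hνQ]
      have : ∑ u, c * μ u * (P ^ n) u s₀ = c * ∑ u, μ u * (P ^ n) u s₀ := by
        rw [Finset.mul_sum]; congr 1; ext u; ring
      rw [this, hμQ, hc, div_mul_cancel₀ _ (ne_of_gt (hμpos s₀))]
    have hterm := (Finset.sum_eq_sum_iff_of_le
      (fun u (_ : u ∈ Finset.univ) =>
        mul_le_mul_of_nonneg_right (hge u) (hpownn n u s₀))).mp hkey
    have := hterm t (mem_univ t)
    have := mul_right_cancel₀ (ne_of_gt hn) this
    linarith
  have hc1 : c = 1 := by
    have : ∑ s : S, ν s = c * ∑ s : S, μ s := by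
      rw [Finset.mul_sum]; exact Finset.sum_congr rfl fun s _ => hall s
    rw [hν1, hμ1] at this; linarith
  funext t
  rw [hall t, hc1, one_mul]

theorem stmt_11 {S : Type*} [Fintype S] [DecidableEq S] [Nonempty S]
    {m : ℕ} (A : Fin m → Finset S)
    (hpart : ∀ s : S, ∃! i : Fin m, s ∈ A i)
    (hne : ∀ i, (A i).Nonempty)
    (P : Matrix S S ℝ)
    (hP0 : ∀ s s' : S, 0 ≤ P s s')
    (hP1 : ∀ s : S, ∑ s' : S, P s s' = 1)
    (α : Fin m → S → ℝ)
    (hα0 : ∀ i, ∀ s : S, s ∉ A i → α i s = 0)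
    (hαpos : ∀ i, ∀ s ∈ A i, 0 < α i s)
    (hα1 : ∀ i, ∑ s ∈ A i, α i s = 1)
    (Pt : Matrix (Fin m) (Fin m) ℝ)
    (hPt : ∀ i j : Fin m, ∀ s ∈ A j,
      Pt i j = (∑ s' ∈ A i, α i s' * P s' s) / α j s)
    (μ : S → ℝ) (hμ0 : ∀ s : S, 0 ≤ μ s) (hμ1 : ∑ s : S, μ s = 1)
    (hμstat : Matrix.vecMul μ P = μ)
    (hresp : ∀ i : Fin m, ∀ s ∈ A i, μ s = α i s * ∑ s' ∈ A i, μ s') :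
    Matrix.vecMul (fun i => ∑ s ∈ A i, μ s) Pt = (fun i => ∑ s ∈ A i, μ s) ∧
      ((∀ s s' : S, ∃ n : ℕ, 0 < (P ^ n) s s') →
        (∀ i j : Fin m, ∃ n : ℕ, 0 < (Pt ^ n) i j) ∧
        ∀ ν : Fin m → ℝ, (∀ i, 0 ≤ ν i) → (∑ i : Fin m, ν i = 1) →
          Matrix.vecMul ν Pt = ν → ν = fun i => ∑ s ∈ A i, μ s) := by
  classical
  -- index function
  have hidxmem : ∀ s : S, s ∈ A (hpart s).choose := fun s => (hpart s).choose_spec.1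
  set idx : S → Fin m := fun s => (hpart s).choose with hidxdef
  have hidxeq : ∀ (s : S) (i : Fin m), s ∈ A i → idx s = i := by
    intro s i h
    exact ((hpart s).choose_spec.2 i h).symm
  have hAidx : ∀ i, A i = Finset.univ.filter (fun s => idx s = i) := by
    intro i
    ext s
    simp only [Finset.mem_filter, Finset.mem_univ, true_and]
    constructor
    · exact hidxeq s i
    · rintro rfl; exact hidxmem s
  have hsum : ∀ f : S → ℝ, ∑ i : Fin m, ∑ s ∈ A i, f s = ∑ s : S, f s := by
    intro f
    calc ∑ i : Fin m, ∑ s ∈ A i, f s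
        = ∑ i : Fin m, ∑ s ∈ Finset.univ.filter (fun s => idx s = i), f s := by
          exact Finset.sum_congr rfl fun i _ => by rw [hAidx i]
      _ = ∑ s : S, f s := Finset.sum_fiberwise Finset.univ idx f
  have hPt' : ∀ i j : Fin m, ∀ s ∈ A j,
      Pt i j * α j s = ∑ s' ∈ A i, α i s' * P s' s := by
    intro i j s hs
    rw [hPt i j s hs, div_mul_cancel₀ _ (ne_of_gt (hαpos j s hs))]
  -- Part 1: stationarity
  have part1 : Matrix.vecMul (fun i => ∑ s ∈ A i, μ s) Pt = (fun i => ∑ s ∈ A i, μ s) := by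
    funext j
    obtain ⟨s, hs⟩ := hne j
    have hα := hαpos j s hs
    have key : Matrix.vecMul (fun i => ∑ s ∈ A i, μ s) Pt j * α j s
        = (∑ s' ∈ A j, μ s') * α j s := by
      rw [stmt11_vapply]
      calc (∑ i : Fin m, (∑ t ∈ A i, μ t) * Pt i j) * α j s
          = ∑ i : Fin m, (∑ t ∈ A i, μ t) * (Pt i j * α j s) := by
            rw [Finset.sum_mul]; exact Finset.sum_congr rfl fun i _ => by ring
        _ = ∑ i : Fin m, (∑ t ∈ A i, μ t) * ∑ s' ∈ A i, α i s' * P s' s := by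
            exact Finset.sum_congr rfl fun i _ => by rw [hPt' i j s hs]
        _ = ∑ i : Fin m, ∑ s' ∈ A i, μ s' * P s' s := by
            refine Finset.sum_congr rfl fun i _ => ?_
            rw [Finset.mul_sum]
            refine Finset.sum_congr rfl fun s' hs' => ?_
            rw [hresp i s' hs']; ring
        _ = ∑ s' : S, μ s' * P s' s := hsum _
        _ = μ s := by rw [← stmt11_vapply, hμstat]
        _ = (∑ s' ∈ A j, μ s') * α j s := by rw [hresp j s hs]; ring
    exact mul_right_cancel₀ (ne_of_gt hα) key
  refine ⟨part1, ?_⟩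
  intro hirr
  -- Cond1 for powers
  have hpow : ∀ (n : ℕ) (i j : Fin m), ∀ s ∈ A j,
      (Pt ^ n) i j * α j s = ∑ s' ∈ A i, α i s' * (P ^ n) s' s := by
    intro n
    induction n with
    | zero =>
        intro i j s hs
        simp only [pow_zero, Matrix.one_apply]
        by_cases hij : i = j
        · subst hij
          rw [if_pos rfl, one_mul]
          symm
          simp only [mul_ite, mul_one, mul_zero]
          rw [Finset.sum_ite_eq' (A i) s (α i), if_pos hs]
        · rw [if_neg hij, zero_mul]
          symm
          apply Finset.sum_eq_zero
          intro s' hs'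
          have : s' ≠ s := by
            rintro rfl
            exact hij ((hidxeq s' i hs').symm.trans (hidxeq s' j hs))
          rw [if_neg this, mul_zero]
    | succ n ih =>
        intro i j s hs
        rw [pow_succ, Matrix.mul_apply]
        calc (∑ k : Fin m, (Pt ^ n) i k * Pt k j) * α j s
            = ∑ k : Fin m, (Pt ^ n) i k * (Pt k j * α j s) := by
              rw [Finset.sum_mul]; exact Finset.sum_congr rfl fun k _ => by ring
          _ = ∑ k : Fin m, (Pt ^ n) i k * ∑ t ∈ A k, α k t * P t s :=
              Finset.sum_congr rfl fun k _ => by rw [hPt' k j s hs]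
          _ = ∑ k : Fin m, ∑ t ∈ A k, ((Pt ^ n) i k * α k t) * P t s := by
              refine Finset.sum_congr rfl fun k _ => ?_
              rw [Finset.mul_sum]
              exact Finset.sum_congr rfl fun t _ => by ring
          _ = ∑ k : Fin m, ∑ t ∈ A k, (∑ s' ∈ A i, α i s' * (P ^ n) s' t) * P t s := by
              refine Finset.sum_congr rfl fun k _ => ?_
              exact Finset.sum_congr rfl fun t ht => by rw [ih i k t ht]
          _ = ∑ t : S, (∑ s' ∈ A i, α i s' * (P ^ n) s' t) * P t s := hsum _
          _ = ∑ s' ∈ A i, α i s' * ∑ t : S, (P ^ n) s' t * P t s := by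
              rw [show (∑ t : S, (∑ s' ∈ A i, α i s' * (P ^ n) s' t) * P t s)
                  = ∑ t : S, ∑ s' ∈ A i, α i s' * (P ^ n) s' t * P t s from
                  Finset.sum_congr rfl fun t _ => by rw [Finset.sum_mul]]
              rw [Finset.sum_comm]
              refine Finset.sum_congr rfl fun s' _ => ?_
              rw [Finset.mul_sum]
              exact Finset.sum_congr rfl fun t _ => by ring
          _ = ∑ s' ∈ A i, α i s' * (P ^ (n + 1)) s' s := by
              refine Finset.sum_congr rfl fun s' _ => ?_
              rw [pow_succ, Matrix.mul_apply]
  -- irreducibility of Pt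
  have hPtirr : ∀ i j : Fin m, ∃ n : ℕ, 0 < (Pt ^ n) i j := by
    intro i j
    obtain ⟨s, hs⟩ := hne j
    obtain ⟨s', hs'⟩ := hne i
    obtain ⟨n, hn⟩ := hirr s' s
    refine ⟨n, ?_⟩
    have hkey := hpow n i j s hs
    have hposα := hαpos j s hs
    have hterm : 0 < α i s' * (P ^ n) s' s := mul_pos (hαpos i s' hs') hn
    have hsumpos : 0 < ∑ u ∈ A i, α i u * (P ^ n) u s := by
      refine Finset.sum_pos' (fun u hu => mul_nonneg (le_of_lt (hαpos i u hu))
        (stmt11_pow_nonneg P hP0 n u s)) ⟨s', hs', hterm⟩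
    nlinarith [hkey]
  refine ⟨hPtirr, ?_⟩
  intro ν hν0 hν1 hνstat
  set μ' : S → ℝ := fun s => α (idx s) s * ν (idx s) with hμ'def
  have hμ'A : ∀ (i : Fin m), ∀ s ∈ A i, μ' s = α i s * ν i := by
    intro i s hs
    simp only [hμ'def]
    rw [hidxeq s i hs]
  have hμ'0 : ∀ s, 0 ≤ μ' s :=
    fun s => mul_nonneg (le_of_lt (hαpos _ s (hidxmem s))) (hν0 _)
  have hμ'1 : ∑ s : S, μ' s = 1 := by
    rw [← hsum μ']
    calc ∑ i : Fin m, ∑ s ∈ A i, μ' s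
        = ∑ i : Fin m, ν i := by
          refine Finset.sum_congr rfl fun i _ => ?_
          rw [Finset.sum_congr rfl (hμ'A i), ← Finset.sum_mul, hα1, one_mul]
      _ = 1 := hν1
  have hμ'stat : Matrix.vecMul μ' P = μ' := by
    funext s
    have hs : s ∈ A (idx s) := hidxmem s
    rw [stmt11_vapply]
    calc ∑ u : S, μ' u * P u s
        = ∑ i : Fin m, ∑ u ∈ A i, μ' u * P u s := (hsum _).symm
      _ = ∑ i : Fin m, ν i * (Pt i (idx s) * α (idx s) s) := by
          refine Finset.sum_congr rfl fun i _ => ?_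
          rw [hPt' i (idx s) s hs, Finset.mul_sum]
          refine Finset.sum_congr rfl fun u hu => ?_
          rw [hμ'A i u hu]; ring
      _ = (∑ i : Fin m, ν i * Pt i (idx s)) * α (idx s) s := by
          rw [Finset.sum_mul]; exact Finset.sum_congr rfl fun i _ => by ring
      _ = ν (idx s) * α (idx s) s := by
          rw [← stmt11_vapply ν Pt (idx s), hνstat]
      _ = μ' s := by rw [hμ'def]; ring
  have heq : μ' = μ := stmt11_unique P hP0 hirr μ μ' hμ0 hμ1 hμstat hμ'1 hμ'stat
  funext i
  calc ν i = ∑ s ∈ A i, μ' s := by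
        rw [Finset.sum_congr rfl (hμ'A i), ← Finset.sum_mul, hα1, one_mul]
    _ = ∑ s ∈ A i, μ s := by rw [heq]
end

section
/- (Cesàro convergence of aggregation) Assume condition (Cond1) holds and P is irreducible with stationary distribution μ. Let π be any initial probability distribution on S and π̃(A_i) = π(A_i). Then as n → ∞: (i) (1/n)∑_{k=1}^n (π̃ P̃^k)(A_i) − (1/n)∑_{k=1}^n (π P^k)(A_i) → 0 for every i; and (ii) for every i and s ∈ A_i, ((1/n)∑_{k=1}^n (π P^k)(s)) / ((1/n)∑_{k=1}^n (π̃ P̃^k)(A_i)) → α_i(s). -/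
open Finset Matrix Filter

section aux

set_option linter.unusedSectionVars false
set_option linter.unusedVariables false

variable {T : Type*} [Fintype T] [DecidableEq T]

lemma my_vecMul_apply (v : T → ℝ) (Q : Matrix T T ℝ) (t : T) :
    Matrix.vecMul v Q t = ∑ s, v s * Q s t := by
  simp [Matrix.vecMul, dotProduct]

lemma my_pow_stoch (Q : Matrix T T ℝ) (hQ0 : ∀ s s', 0 ≤ Q s s')
    (hQ1 : ∀ s, ∑ s', Q s s' = 1) (n : ℕ) :
    (∀ s s', 0 ≤ (Q ^ n) s s') ∧ (∀ s, ∑ s', (Q ^ n) s s' = 1) := by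
  induction n with
  | zero =>
    refine ⟨fun s s' => ?_, fun s => ?_⟩ <;> simp [pow_zero, Matrix.one_apply]
    positivity
  | succ n ih =>
    rw [pow_succ]
    refine ⟨fun s s' => ?_, fun s => ?_⟩
    · rw [Matrix.mul_apply]
      exact Finset.sum_nonneg fun t _ => mul_nonneg (ih.1 s t) (hQ0 t s')
    · simp only [Matrix.mul_apply]
      rw [Finset.sum_comm]
      simp [← Finset.mul_sum, hQ1, ih.2]

lemma my_prob_vecMul (Q : Matrix T T ℝ) (hQ0 : ∀ s s', 0 ≤ Q s s')
    (hQ1 : ∀ s, ∑ s', Q s s' = 1) (v : T → ℝ) (hv0 : ∀ t, 0 ≤ v t)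
    (hv1 : ∑ t, v t = 1) :
    (∀ t, 0 ≤ Matrix.vecMul v Q t) ∧ ∑ t, Matrix.vecMul v Q t = 1 := by
  constructor
  · intro t
    rw [my_vecMul_apply]
    exact Finset.sum_nonneg fun s _ => mul_nonneg (hv0 s) (hQ0 s t)
  · simp only [my_vecMul_apply]
    rw [Finset.sum_comm]
    simp [← Finset.mul_sum, hQ1, hv1]

lemma my_isCompact_simplex :
    IsCompact {v : T → ℝ | (∀ t, 0 ≤ v t) ∧ ∑ t, v t = 1} := by
  have hclosed : IsClosed {v : T → ℝ | (∀ t, 0 ≤ v t) ∧ ∑ t, v t = 1} := by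
    have h1 : IsClosed {v : T → ℝ | ∀ t, 0 ≤ v t} := by
      have : {v : T → ℝ | ∀ t, 0 ≤ v t} = ⋂ t, (fun v : T → ℝ => v t) ⁻¹' Set.Ici 0 := by
        ext v; simp [Set.mem_iInter]
      rw [this]
      exact isClosed_iInter fun t => isClosed_Ici.preimage (continuous_apply t)
    have h2 : IsClosed {v : T → ℝ | ∑ t, v t = 1} := by
      have : {v : T → ℝ | ∑ t, v t = 1} = (fun v : T → ℝ => ∑ t, v t) ⁻¹' {1} := rfl
      rw [this]
      exact isClosed_singleton.preimage (continuous_finset_sum _ fun t _ => continuous_apply t)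
    exact h1.inter h2
  refine IsCompact.of_isClosed_subset (isCompact_univ_pi fun _ : T => isCompact_Icc
    (a := (0:ℝ)) (b := 1)) hclosed ?_
  intro v hv
  rw [Set.mem_univ_pi]
  intro t
  refine ⟨hv.1 t, ?_⟩
  calc v t ≤ ∑ t', v t' := Finset.single_le_sum (fun t' _ => hv.1 t') (Finset.mem_univ t)
  _ = 1 := hv.2

lemma my_vecMul_sum (f : ℕ → T → ℝ) (n : ℕ) (Q : Matrix T T ℝ) :
    Matrix.vecMul (∑ k ∈ Finset.range n, f k) Q
      = ∑ k ∈ Finset.range n, Matrix.vecMul (f k) Q := by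
  ext t
  rw [Finset.sum_apply, my_vecMul_apply]
  simp only [my_vecMul_apply, Finset.sum_apply, Finset.sum_mul]
  exact Finset.sum_comm

lemma my_key (Q : Matrix T T ℝ) (y : ℕ → T → ℝ)
    (hy0 : ∀ n t, 0 ≤ y n t) (hy1 : ∀ n, ∑ t, y n t = 1)
    (hnull : Tendsto (fun n => Matrix.vecMul (y n) Q - y n) atTop (nhds 0)) :
    ∃ a : T → ℝ, (∀ t, 0 ≤ a t) ∧ (∑ t, a t = 1) ∧ Matrix.vecMul a Q = a ∧
      ∃ φ : ℕ → ℕ, StrictMono φ ∧ Tendsto (y ∘ φ) atTop (nhds a) := by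
  obtain ⟨a, haK, φ, hφ, hconv⟩ :=
    my_isCompact_simplex.tendsto_subseq (x := y) (fun n => ⟨hy0 n, hy1 n⟩)
  have hcont : Continuous fun v : T → ℝ => Matrix.vecMul v Q := by
    apply continuous_pi
    intro t
    simp only [my_vecMul_apply]
    exact continuous_finset_sum _ fun s _ => (continuous_apply s).mul continuous_const
  have h1 : Tendsto (fun n => Matrix.vecMul (y (φ n)) Q) atTop (nhds (Matrix.vecMul a Q)) :=
    (hcont.tendsto a).comp hconv
  have h2 : Tendsto (fun n => Matrix.vecMul (y (φ n)) Q - y (φ n)) atTop (nhds 0) :=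
    hnull.comp hφ.tendsto_atTop
  have h3 : Tendsto (fun n => Matrix.vecMul (y (φ n)) Q) atTop (nhds a) := by
    have := h2.add hconv
    simpa using this
  exact ⟨a, haK.1, haK.2, tendsto_nhds_unique h1 h3, φ, hφ, hconv⟩

set_option maxHeartbeats 800000 in
lemma my_cesaro_sub (Q : Matrix T T ℝ) (hQ0 : ∀ s s', 0 ≤ Q s s')
    (hQ1 : ∀ s, ∑ s', Q s s' = 1) (π : T → ℝ) (hπ0 : ∀ t, 0 ≤ π t)
    (hπ1 : ∑ t, π t = 1) (ns : ℕ → ℕ) (hns : Tendsto ns atTop atTop) :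
    ∃ a : T → ℝ, (∀ t, 0 ≤ a t) ∧ (∑ t, a t = 1) ∧ Matrix.vecMul a Q = a ∧
      ∃ φ : ℕ → ℕ, StrictMono φ ∧
        Tendsto (fun n => (((ns (φ n) + 1 : ℕ) : ℝ))⁻¹ •
          ∑ k ∈ Finset.range (ns (φ n) + 1), Matrix.vecMul π (Q ^ (k + 1)))
          atTop (nhds a) := by
  set f : ℕ → T → ℝ := fun k => Matrix.vecMul π (Q ^ (k + 1)) with hf
  have hfprob : ∀ k, (∀ t, 0 ≤ f k t) ∧ ∑ t, f k t = 1 := fun k =>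
    my_prob_vecMul _ (my_pow_stoch Q hQ0 hQ1 (k+1)).1 (my_pow_stoch Q hQ0 hQ1 (k+1)).2 π hπ0 hπ1
  have hfle : ∀ k t, f k t ≤ 1 := by
    intro k t
    calc f k t ≤ ∑ t', f k t' :=
      Finset.single_le_sum (fun t' _ => (hfprob k).1 t') (Finset.mem_univ t)
    _ = 1 := (hfprob k).2
  set u : ℕ → T → ℝ := fun n => ((n : ℝ))⁻¹ • ∑ k ∈ Finset.range n, f k with hu
  have hu0 : ∀ n, ∀ t, 0 ≤ u (n + 1) t := by
    intro n t
    simp only [hu, Pi.smul_apply, smul_eq_mul, Finset.sum_apply]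
    exact mul_nonneg (by positivity) (Finset.sum_nonneg fun k _ => (hfprob k).1 t)
  have hu1 : ∀ n, ∑ t, u (n + 1) t = 1 := by
    intro n
    simp only [hu, Pi.smul_apply, smul_eq_mul, Finset.sum_apply]
    rw [← Finset.mul_sum, Finset.sum_comm]
    simp only [(fun k => (hfprob k).2)]
    rw [Finset.sum_const, Finset.card_range, nsmul_eq_mul, mul_one, inv_mul_cancel₀]
    push_cast
    positivity
  have hid : ∀ n : ℕ, Matrix.vecMul (u n) Q - u n = ((n : ℝ))⁻¹ • (f n - f 0) := by
    intro n
    have h1 : Matrix.vecMul (u n) Q = ((n : ℝ))⁻¹ • ∑ k ∈ Finset.range n, f (k + 1) := by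
      rw [hu]
      simp only
      rw [Matrix.smul_vecMul, my_vecMul_sum]
      congr 1
      apply Finset.sum_congr rfl
      intro k _
      rw [hf]
      simp only
      rw [Matrix.vecMul_vecMul, ← pow_succ]
    rw [h1, hu]
    simp only
    rw [← smul_sub, ← Finset.sum_sub_distrib, Finset.sum_range_sub (f := f)]
  have hnull : Tendsto (fun n => Matrix.vecMul (u (n + 1)) Q - u (n + 1)) atTop (nhds 0) := by
    have heq : (fun n => Matrix.vecMul (u (n + 1)) Q - u (n + 1))
        = fun n : ℕ => (((n + 1 : ℕ) : ℝ))⁻¹ • (f (n + 1) - f 0) := by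
      funext n; exact hid (n + 1)
    rw [heq, tendsto_pi_nhds]
    intro t
    simp only [Pi.smul_apply, Pi.sub_apply, smul_eq_mul, Pi.zero_apply]
    apply squeeze_zero_norm (a := fun n : ℕ => 2 / ((n : ℝ) + 1))
    · intro n
      rw [Real.norm_eq_abs, abs_mul, abs_inv]
      have h1 : |f (n + 1) t - f 0 t| ≤ 2 := by
        have := hfle (n+1) t; have := (hfprob (n+1)).1 t
        have := hfle 0 t; have := (hfprob 0).1 t
        rw [abs_le]; constructor <;> linarith
      have h2 : |((n + 1 : ℕ) : ℝ)| = (n : ℝ) + 1 := by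
        rw [abs_of_nonneg] <;> push_cast <;> [skip; positivity]
        ring
      rw [h2, div_eq_mul_inv, mul_comm]
      apply mul_le_mul_of_nonneg_right h1
      positivity
    · have := tendsto_one_div_add_atTop_nhds_zero_nat.const_mul (2:ℝ)
      simpa [div_eq_mul_inv, mul_comm, mul_assoc] using this
  obtain ⟨a, ha0, ha1, hstat, φ, hφ, hconv⟩ :=
    my_key Q (fun n => u (ns n + 1)) (fun n => hu0 (ns n)) (fun n => hu1 (ns n))
      (by
        have : (fun n => Matrix.vecMul (u (ns n + 1)) Q - u (ns n + 1))
            = (fun n => Matrix.vecMul (u (n + 1)) Q - u (n + 1)) ∘ ns := rfl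
        rw [this]
        exact hnull.comp hns)
  exact ⟨a, ha0, ha1, hstat, φ, hφ, by exact hconv⟩

lemma my_cesaro (Q : Matrix T T ℝ) (hQ0 : ∀ s s', 0 ≤ Q s s')
    (hQ1 : ∀ s, ∑ s', Q s s' = 1) (ρ : T → ℝ)
    (huniq : ∀ θ : T → ℝ, (∀ t, 0 ≤ θ t) → (∑ t, θ t = 1) →
      Matrix.vecMul θ Q = θ → θ = ρ)
    (π : T → ℝ) (hπ0 : ∀ t, 0 ≤ π t) (hπ1 : ∑ t, π t = 1) :
    Tendsto (fun n : ℕ => ((n : ℝ))⁻¹ •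
      ∑ k ∈ Finset.range n, Matrix.vecMul π (Q ^ (k + 1))) atTop (nhds ρ) := by
  rw [← tendsto_add_atTop_iff_nat 1]
  apply tendsto_of_subseq_tendsto
  intro ns hns
  obtain ⟨a, ha0, ha1, hstat, φ, hφ, hconv⟩ := my_cesaro_sub Q hQ0 hQ1 π hπ0 hπ1 ns hns
  refine ⟨φ, ?_⟩
  rwa [huniq a ha0 ha1 hstat] at hconv

lemma my_exists_stationary [Nonempty T] (Q : Matrix T T ℝ) (hQ0 : ∀ s s', 0 ≤ Q s s')
    (hQ1 : ∀ s, ∑ s', Q s s' = 1) (π : T → ℝ) (hπ0 : ∀ t, 0 ≤ π t)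
    (hπ1 : ∑ t, π t = 1) :
    ∃ θ : T → ℝ, (∀ t, 0 ≤ θ t) ∧ (∑ t, θ t = 1) ∧ Matrix.vecMul θ Q = θ := by
  obtain ⟨a, ha0, ha1, hstat, -⟩ := my_cesaro_sub Q hQ0 hQ1 π hπ0 hπ1 id tendsto_id
  exact ⟨a, ha0, ha1, hstat⟩

lemma my_stat_pow (Q : Matrix T T ℝ) (w : T → ℝ) (hw : Matrix.vecMul w Q = w) (n : ℕ) :
    Matrix.vecMul w (Q ^ n) = w := by
  induction n with
  | zero => simp [pow_zero]
  | succ n ih => rw [pow_succ, ← Matrix.vecMul_vecMul, ih, hw]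

lemma my_pos_of_stat (Q : Matrix T T ℝ) (hQ0 : ∀ s s', 0 ≤ Q s s')
    (hirr : ∀ s s' : T, ∃ n : ℕ, 0 < (Q ^ n) s s')
    (w : T → ℝ) (hw0 : ∀ s, 0 ≤ w s) (hw : Matrix.vecMul w Q = w)
    (s0 : T) (hs0 : 0 < w s0) : ∀ s, 0 < w s := by
  have hQn0 : ∀ n s s', 0 ≤ (Q ^ n) s s' := by
    intro n
    induction n with
    | zero => intro s s'; rw [pow_zero]; simp [Matrix.one_apply]; positivity
    | succ n ih =>
      intro s s'
      rw [pow_succ, Matrix.mul_apply]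
      exact Finset.sum_nonneg fun t _ => mul_nonneg (ih s t) (hQ0 t s')
  intro s
  obtain ⟨n, hn⟩ := hirr s0 s
  have h1 : w s = ∑ s', w s' * (Q ^ n) s' s := by
    conv_lhs => rw [← my_stat_pow Q w hw n]
    rw [my_vecMul_apply]
  have h2 : w s0 * (Q ^ n) s0 s ≤ ∑ s', w s' * (Q ^ n) s' s :=
    Finset.single_le_sum (f := fun s' => w s' * (Q ^ n) s' s)
      (fun s' _ => mul_nonneg (hw0 s') (hQn0 n s' s)) (Finset.mem_univ s0)
  rw [h1]
  exact lt_of_lt_of_le (mul_pos hs0 hn) h2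

lemma my_uniq [Nonempty T] (Q : Matrix T T ℝ) (hQ0 : ∀ s s', 0 ≤ Q s s')
    (hirr : ∀ s s' : T, ∃ n : ℕ, 0 < (Q ^ n) s s')
    (μ : T → ℝ) (hμ0 : ∀ s, 0 ≤ μ s) (hμ1 : ∑ s, μ s = 1)
    (hμ : Matrix.vecMul μ Q = μ)
    (ν : T → ℝ) (hν0 : ∀ s, 0 ≤ ν s) (hν1 : ∑ s, ν s = 1)
    (hν : Matrix.vecMul ν Q = ν) : ν = μ := by
  have hμpos : ∀ s, 0 < μ s := by
    obtain ⟨s0, hs0⟩ : ∃ s, 0 < μ s := by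
      by_contra h
      push_neg at h
      have : ∑ s, μ s = 0 := Finset.sum_eq_zero fun s _ => le_antisymm (h s) (hμ0 s)
      rw [this] at hμ1
      norm_num at hμ1
    exact my_pos_of_stat Q hQ0 hirr μ hμ0 hμ s0 hs0
  obtain ⟨sm, -, hmin⟩ := Finset.exists_min_image Finset.univ (fun s => ν s / μ s)
    Finset.univ_nonempty
  set c := ν sm / μ sm with hc
  set w : T → ℝ := ν - c • μ with hwdef
  have hw0 : ∀ s, 0 ≤ w s := by
    intro s
    have h1 : c ≤ ν s / μ s := hmin s (Finset.mem_univ s)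
    have h2 : c * μ s ≤ ν s := (le_div_iff₀ (hμpos s)).mp h1
    simp only [hwdef, Pi.sub_apply, Pi.smul_apply, smul_eq_mul]
    linarith
  have hwstat : Matrix.vecMul w Q = w := by
    rw [hwdef, Matrix.sub_vecMul, Matrix.smul_vecMul, hμ, hν]
  have hwsm : w sm = 0 := by
    simp only [hwdef, Pi.sub_apply, Pi.smul_apply, smul_eq_mul, hc]
    rw [div_mul_cancel₀ _ (hμpos sm).ne']
    ring
  have hwzero : ∀ s, w s = 0 := by
    by_contra h
    push_neg at h
    obtain ⟨s1, hs1⟩ := h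
    have : 0 < w s1 := lt_of_le_of_ne (hw0 s1) (Ne.symm hs1)
    have := my_pos_of_stat Q hQ0 hirr w hw0 hwstat s1 this sm
    linarith [hwsm]
  have hνc : ∀ s, ν s = c * μ s := by
    intro s
    have := hwzero s
    simp only [hwdef, Pi.sub_apply, Pi.smul_apply, smul_eq_mul] at this
    linarith
  have hc1 : c = 1 := by
    have : ∑ s, ν s = c * ∑ s, μ s := by
      rw [Finset.mul_sum]; exact Finset.sum_congr rfl fun s _ => hνc s
    rw [hν1, hμ1, mul_one] at this
    exact this.symm
  funext s
  rw [hνc s, hc1, one_mul]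

end aux

theorem stmt_12 {S : Type*} [Fintype S] [DecidableEq S] [Nonempty S]
    {m : ℕ} (A : Fin m → Finset S)
    (hpart : ∀ s : S, ∃! i : Fin m, s ∈ A i)
    (hne : ∀ i, (A i).Nonempty)
    (P : Matrix S S ℝ)
    (hP0 : ∀ s s' : S, 0 ≤ P s s')
    (hP1 : ∀ s : S, ∑ s' : S, P s s' = 1)
    (α : Fin m → S → ℝ)
    (hα0 : ∀ i, ∀ s : S, s ∉ A i → α i s = 0)
    (hαpos : ∀ i, ∀ s ∈ A i, 0 < α i s)
    (hα1 : ∀ i, ∑ s ∈ A i, α i s = 1)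
    (Pt : Matrix (Fin m) (Fin m) ℝ)
    (hPt : ∀ i j : Fin m, ∀ s ∈ A j,
      Pt i j = (∑ s' ∈ A i, α i s' * P s' s) / α j s)
    (hirr : ∀ s s' : S, ∃ n : ℕ, 0 < (P ^ n) s s')
    (μ : S → ℝ) (hμ0 : ∀ s : S, 0 ≤ μ s) (hμ1 : ∑ s : S, μ s = 1)
    (hμstat : Matrix.vecMul μ P = μ)
    (π : S → ℝ) (hπ0 : ∀ s : S, 0 ≤ π s) (hπ1 : ∑ s : S, π s = 1) :
    (∀ i : Fin m,
        Filter.Tendsto (fun n : ℕ =>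
          (1 / (n : ℝ)) * (∑ k ∈ Finset.range n,
              Matrix.vecMul (fun i' => ∑ s ∈ A i', π s) (Pt ^ (k + 1)) i)
            - (1 / (n : ℝ)) * ∑ k ∈ Finset.range n, ∑ s ∈ A i, Matrix.vecMul π (P ^ (k + 1)) s)
          Filter.atTop (nhds 0)) ∧
      (∀ i : Fin m, ∀ s ∈ A i,
        Filter.Tendsto (fun n : ℕ =>
          ((1 / (n : ℝ)) * ∑ k ∈ Finset.range n, Matrix.vecMul π (P ^ (k + 1)) s)
            / ((1 / (n : ℝ)) * ∑ k ∈ Finset.range n,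
                Matrix.vecMul (fun i' => ∑ s' ∈ A i', π s') (Pt ^ (k + 1)) i))
          Filter.atTop (nhds (α i s))) := by
  classical
  -- index function
  set idx : S → Fin m := fun s => (hpart s).choose with hidxdef
  have hmemidx : ∀ s, s ∈ A (idx s) := fun s => (hpart s).choose_spec.1
  have hidxeq : ∀ {s : S} {i : Fin m}, s ∈ A i → idx s = i :=
    fun {s i} h => ((hpart s).choose_spec.2 i h).symm
  haveI : Nonempty (Fin m) := ⟨idx (Classical.arbitrary S)⟩
  -- partition sum
  have hsum : ∀ f : S → ℝ, ∑ i, ∑ s ∈ A i, f s = ∑ s, f s := by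
    intro f
    have hA : ∀ i, A i = Finset.univ.filter (fun s => idx s = i) := by
      intro i
      ext s
      simp only [Finset.mem_filter, Finset.mem_univ, true_and]
      constructor
      · exact fun h => hidxeq h
      · intro h; rw [← h]; exact hmemidx s
    calc ∑ i, ∑ s ∈ A i, f s
        = ∑ i, ∑ s ∈ Finset.univ.filter (fun s => idx s = i), f s := by
          exact Finset.sum_congr rfl fun i _ => by rw [hA i]
    _ = ∑ s, f s := Finset.sum_fiberwise _ _ _
  -- α nonneg
  have hαnn : ∀ i s, 0 ≤ α i s := by
    intro i s
    by_cases h : s ∈ A i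
    · exact (hαpos i s h).le
    · rw [hα0 i s h]
  -- Pt stochastic
  have hPtmul : ∀ i j, ∀ s ∈ A j, Pt i j * α j s = ∑ s' ∈ A i, α i s' * P s' s := by
    intro i j s hs
    rw [hPt i j s hs, div_mul_cancel₀ _ (hαpos j s hs).ne']
  have hPt0 : ∀ i j, 0 ≤ Pt i j := by
    intro i j
    obtain ⟨s, hs⟩ := hne j
    rw [hPt i j s hs]
    exact div_nonneg (Finset.sum_nonneg fun s' _ => mul_nonneg (hαnn i s') (hP0 s' s))
      (hαnn j s)
  have hPt1 : ∀ i, ∑ j, Pt i j = 1 := by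
    intro i
    have e1 : ∑ j, Pt i j = ∑ j, ∑ s ∈ A j, Pt i j * α j s := by
      exact Finset.sum_congr rfl fun j _ => by rw [← Finset.mul_sum, hα1 j, mul_one]
    have e2 : ∑ j, ∑ s ∈ A j, Pt i j * α j s
        = ∑ j, ∑ s ∈ A j, ∑ s' ∈ A i, α i s' * P s' s :=
      Finset.sum_congr rfl fun j _ => Finset.sum_congr rfl fun s hs => hPtmul i j s hs
    rw [e1, e2, hsum (fun s => ∑ s' ∈ A i, α i s' * P s' s), Finset.sum_comm]
    have e3 : ∀ s' ∈ A i, ∑ s : S, α i s' * P s' s = α i s' := by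
      intro s' _
      rw [← Finset.mul_sum, hP1 s', mul_one]
    rw [Finset.sum_congr rfl e3, hα1 i]
  -- bridging lemma
  have hbridge : ∀ θ : Fin m → ℝ, (∀ j, 0 ≤ θ j) → (∑ j, θ j = 1) →
      Matrix.vecMul θ Pt = θ →
      (θ = fun j => ∑ s ∈ A j, μ s) ∧ (∀ s, μ s = θ (idx s) * α (idx s) s) := by
    intro θ h0 h1 hstat
    set L : S → ℝ := fun s => θ (idx s) * α (idx s) s with hL
    have hL0 : ∀ s, 0 ≤ L s := fun s => mul_nonneg (h0 _) (hαnn _ _)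
    have hLgroup : ∀ j, ∑ s ∈ A j, L s = θ j := by
      intro j
      have e : ∀ s ∈ A j, L s = θ j * α j s := by
        intro s hs
        rw [hL]
        simp only
        rw [hidxeq hs]
      rw [Finset.sum_congr rfl e, ← Finset.mul_sum, hα1 j, mul_one]
    have hL1 : ∑ s, L s = 1 := by
      rw [← hsum L, Finset.sum_congr rfl (fun j _ => hLgroup j), h1]
    have hLstat : Matrix.vecMul L P = L := by
      funext s
      rw [my_vecMul_apply]
      rw [← hsum (fun s' => L s' * P s' s)]
      have e1 : ∀ i, ∑ s' ∈ A i, L s' * P s' s = θ i * (Pt i (idx s) * α (idx s) s) := by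
        intro i
        have e2 : ∀ s' ∈ A i, L s' * P s' s = θ i * (α i s' * P s' s) := by
          intro s' hs'
          rw [hL]
          simp only
          rw [hidxeq hs']
          ring
        rw [Finset.sum_congr rfl e2, ← Finset.mul_sum, ← hPtmul i (idx s) s (hmemidx s)]
      rw [Finset.sum_congr rfl (fun i _ => e1 i)]
      have e3 : ∑ i, θ i * (Pt i (idx s) * α (idx s) s)
          = (∑ i, θ i * Pt i (idx s)) * α (idx s) s := by
        rw [Finset.sum_mul]
        exact Finset.sum_congr rfl fun i _ => by ring
      rw [e3, ← my_vecMul_apply θ Pt (idx s), hstat]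
    have hLμ : L = μ := my_uniq P hP0 hirr μ hμ0 hμ1 hμstat L hL0 hL1 hLstat
    constructor
    · funext j
      rw [← hLμ]
      exact (hLgroup j).symm
    · intro s
      rw [← hLμ]
  -- π tilde
  set πt : Fin m → ℝ := fun i' => ∑ s ∈ A i', π s with hπt
  have hπt0 : ∀ j, 0 ≤ πt j := fun j => Finset.sum_nonneg fun s _ => hπ0 s
  have hπt1 : ∑ j, πt j = 1 := by rw [hπt]; simp only; rw [hsum π]; exact hπ1
  -- existence of a stationary distribution for Pt, giving μ decomposition
  obtain ⟨θ0, h00, h01, h0stat⟩ := my_exists_stationary Pt hPt0 hPt1 πt hπt0 hπt1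
  obtain ⟨h0eq, h0dec⟩ := hbridge θ0 h00 h01 h0stat
  have hμdec : ∀ s : S, μ s = (∑ s' ∈ A (idx s), μ s') * α (idx s) s := by
    intro s
    rw [h0dec s, h0eq]
  -- μ positive
  have hμpos : ∀ s, 0 < μ s := by
    obtain ⟨s0, hs0⟩ : ∃ s, 0 < μ s := by
      by_contra h
      push_neg at h
      have : ∑ s, μ s = 0 := Finset.sum_eq_zero fun s _ => le_antisymm (h s) (hμ0 s)
      rw [this] at hμ1
      norm_num at hμ1
    exact my_pos_of_stat P hP0 hirr μ hμ0 hμstat s0 hs0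
  have hμApos : ∀ i, 0 < ∑ s ∈ A i, μ s :=
    fun i => Finset.sum_pos (fun s _ => hμpos s) (hne i)
  -- Cesàro convergence for P
  have huP : Tendsto (fun n : ℕ => ((n : ℝ))⁻¹ •
      ∑ k ∈ Finset.range n, Matrix.vecMul π (P ^ (k + 1))) atTop (nhds μ) :=
    my_cesaro P hP0 hP1 μ
      (fun θ h0 h1 hs => my_uniq P hP0 hirr μ hμ0 hμ1 hμstat θ h0 h1 hs) π hπ0 hπ1
  -- Cesàro convergence for Pt
  have huPt : Tendsto (fun n : ℕ => ((n : ℝ))⁻¹ •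
      ∑ k ∈ Finset.range n, Matrix.vecMul πt (Pt ^ (k + 1))) atTop
      (nhds (fun j => ∑ s ∈ A j, μ s)) :=
    my_cesaro Pt hPt0 hPt1 _ (fun θ h0 h1 hs => (hbridge θ h0 h1 hs).1) πt hπt0 hπt1
  -- coordinates
  have haP : ∀ s : S, Tendsto (fun n : ℕ =>
      (1 / (n : ℝ)) * ∑ k ∈ Finset.range n, Matrix.vecMul π (P ^ (k + 1)) s)
      atTop (nhds (μ s)) := by
    intro s
    have := tendsto_pi_nhds.mp huP s
    simp only [Pi.smul_apply, Finset.sum_apply, smul_eq_mul] at this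
    simpa [one_div] using this
  have hbPt : ∀ i : Fin m, Tendsto (fun n : ℕ =>
      (1 / (n : ℝ)) * ∑ k ∈ Finset.range n, Matrix.vecMul πt (Pt ^ (k + 1)) i)
      atTop (nhds (∑ s ∈ A i, μ s)) := by
    intro i
    have := tendsto_pi_nhds.mp huPt i
    simp only [Pi.smul_apply, Finset.sum_apply, smul_eq_mul] at this
    simpa [one_div] using this
  constructor
  · -- part (i)
    intro i
    have h2 : Tendsto (fun n : ℕ => ∑ s ∈ A i,
        ((1 / (n : ℝ)) * ∑ k ∈ Finset.range n, Matrix.vecMul π (P ^ (k + 1)) s))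
        atTop (nhds (∑ s ∈ A i, μ s)) :=
      tendsto_finset_sum _ fun s _ => haP s
    have h3 := (hbPt i).sub h2
    rw [sub_self] at h3
    refine h3.congr fun n => ?_
    congr 1
    rw [Finset.mul_sum]
    simp only [Finset.mul_sum]
    exact Finset.sum_comm
  · -- part (ii)
    intro i s hs
    have hdec : μ s = (∑ s' ∈ A i, μ s') * α i s := by
      have := hμdec s
      rwa [hidxeq hs] at this
    have hlim : μ s / (∑ s' ∈ A i, μ s') = α i s := by
      rw [hdec]
      exact mul_div_cancel_left₀ _ (hμApos i).ne'
    have := (haP s).div (hbPt i) (hμApos i).ne'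
    rwa [hlim] at this
end

section
/- Assume condition (Cond1) holds and P is irreducible and aperiodic (every state has period 1), with stationary distribution μ. Let π be any initial probability distribution on S and π̃(A_i) = π(A_i). Then as n → ∞: (i) (π̃ P̃^n)(A_i) − (π P^n)(A_i) → 0 for every i; and (ii) for every i and s ∈ A_i, (π P^n)(s) / (π̃ P̃^n)(A_i) → α_i(s). -/
open Finset Matrix Filter

set_option linter.unusedSectionVars false
set_option maxHeartbeats 1000000

section Aux

lemma subm_cofinite (M : AddSubmonoid ℕ) {a b : ℕ} (ha : a ∈ M) (hb : b ∈ M)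
    (hab : a = b + 1) : ∀ n, b * b ≤ n → n ∈ M := by
  intro n hn
  rcases Nat.eq_zero_or_pos b with h0 | hbpos
  · subst h0
    have : n = n • a := by simp [hab]
    rw [this]; exact M.nsmul_mem ha n
  · set q := n / b with hq
    set r := n % b with hr
    have hrb : r < b := Nat.mod_lt _ hbpos
    have hqb : b ≤ q := Nat.le_div_iff_mul_le hbpos |>.mpr (by nlinarith)
    have hrq : r ≤ q := le_trans (le_of_lt hrb) hqb
    have key : n = (q - r) • b + r • a := by
      simp only [smul_eq_mul, hab]
      calc n = q * b + r := by rw [hq, hr, mul_comm]; exact (Nat.div_add_mod n b).symm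
        _ = ((q - r) + r) * b + r := by rw [Nat.sub_add_cancel hrq]
        _ = (q - r) * b + r * (b + 1) := by ring
    rw [key]
    exact M.add_mem (M.nsmul_mem hb _) (M.nsmul_mem ha _)

lemma gcd_one_combo (M : AddSubmonoid ℕ)
    (hgcd : ∀ d : ℕ, (∀ n, 1 ≤ n → n ∈ M → d ∣ n) → d = 1) :
    ∃ a b, a ∈ M ∧ b ∈ M ∧ a = b + 1 := by
  classical
  set H : AddSubgroup ℤ := AddSubgroup.closure ((fun n : ℕ => (n : ℤ)) '' M)
  obtain ⟨g, hg⟩ := Int.subgroup_cyclic H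
  have hdvd : ∀ n : ℕ, n ∈ M → (g : ℤ) ∣ (n : ℤ) := by
    intro n hn
    have : (n : ℤ) ∈ H := AddSubgroup.subset_closure ⟨n, hn, rfl⟩
    rw [hg, AddSubgroup.mem_closure_singleton] at this
    obtain ⟨k, hk⟩ := this
    exact ⟨k, by rw [← hk]; rw [smul_eq_mul]; ring⟩
  have hgnat : g.natAbs = 1 := by
    apply hgcd
    intro n _ hn
    exact Int.ofNat_dvd.mp (Int.natAbs_dvd.mpr (hdvd n hn))
  have h1 : (1 : ℤ) ∈ H := by
    rw [hg, AddSubgroup.mem_closure_singleton]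
    rcases Int.natAbs_eq g with h | h
    · exact ⟨1, by rw [hgnat] at h; rw [one_smul]; omega⟩
    · exact ⟨-1, by rw [hgnat] at h; rw [neg_smul, one_smul]; omega⟩
  have hdiff : ∀ x : ℤ, x ∈ H → ∃ a b : ℕ, a ∈ M ∧ b ∈ M ∧ x = (a : ℤ) - b := by
    intro x hx
    refine AddSubgroup.closure_induction ?_ ?_ ?_ ?_ hx
    · rintro y ⟨n, hn, rfl⟩; exact ⟨n, 0, hn, M.zero_mem, by simp⟩
    · exact ⟨0, 0, M.zero_mem, M.zero_mem, by simp⟩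
    · rintro y z - - ⟨a, b, ha, hb, rfl⟩ ⟨c, d, hc, hd, rfl⟩
      exact ⟨a + c, b + d, M.add_mem ha hc, M.add_mem hb hd, by push_cast; ring⟩
    · rintro y - ⟨a, b, ha, hb, rfl⟩
      exact ⟨b, a, hb, ha, by ring⟩
  obtain ⟨a, b, ha, hb, hab⟩ := hdiff 1 h1
  exact ⟨a, b, ha, hb, by omega⟩

variable {S : Type*} [Fintype S] [DecidableEq S] [Nonempty S]

lemma pow_nonneg_ent {P : Matrix S S ℝ} (hP0 : ∀ s s', 0 ≤ P s s') :
    ∀ n, ∀ s s', 0 ≤ (P ^ n) s s' := by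
  intro n
  induction n with
  | zero => intro s s'; simp [Matrix.one_apply]; positivity
  | succ n ih =>
    intro s s'
    rw [pow_succ, Matrix.mul_apply]
    exact Finset.sum_nonneg fun t _ => mul_nonneg (ih s t) (hP0 t s')

lemma pow_rowsum {P : Matrix S S ℝ} (hP1 : ∀ s, ∑ s' : S, P s s' = 1) :
    ∀ n, ∀ s : S, ∑ s' : S, (P ^ n) s s' = 1 := by
  intro n
  induction n with
  | zero => intro s; simp [Matrix.one_apply]
  | succ n ih =>
    intro s
    simp only [pow_succ, Matrix.mul_apply]
    rw [Finset.sum_comm]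
    calc (∑ t : S, ∑ s' : S, (P ^ n) s t * P t s')
        = ∑ t : S, (P ^ n) s t := by
          refine Finset.sum_congr rfl fun t _ => ?_
          rw [← Finset.mul_sum, hP1 t, mul_one]
      _ = 1 := ih s

lemma pow_pos_mul {P : Matrix S S ℝ} (hP0 : ∀ s s', 0 ≤ P s s') {a b : ℕ} {s t s' : S}
    (ha : 0 < (P ^ a) s t) (hb : 0 < (P ^ b) t s') : 0 < (P ^ (a + b)) s s' := by
  rw [pow_add, Matrix.mul_apply]
  have hterm : 0 < (P ^ a) s t * (P ^ b) t s' := mul_pos ha hb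
  refine lt_of_lt_of_le hterm ?_
  exact Finset.single_le_sum (fun u _ => mul_nonneg (pow_nonneg_ent hP0 a s u)
    (pow_nonneg_ent hP0 b u s')) (Finset.mem_univ t)

lemma exists_primitive {P : Matrix S S ℝ} (hP0 : ∀ s s', 0 ≤ P s s')
    (hirr : ∀ s s' : S, ∃ n : ℕ, 0 < (P ^ n) s s')
    (haper : ∀ s : S, ∀ d : ℕ, (∀ n : ℕ, 1 ≤ n → 0 < (P ^ n) s s → d ∣ n) → d = 1) :
    ∃ N : ℕ, 1 ≤ N ∧ ∀ s s' : S, 0 < (P ^ N) s s' := by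
  classical
  have hdiag : ∀ s : S, ∃ N : ℕ, ∀ n, N ≤ n → 0 < (P ^ n) s s := by
    intro s
    set M : AddSubmonoid ℕ :=
      { carrier := {n | 0 < (P ^ n) s s}
        zero_mem' := by simp [Matrix.one_apply]
        add_mem' := fun hx hy => pow_pos_mul hP0 hx hy } with hM
    obtain ⟨a, b, ha, hb, hab⟩ := gcd_one_combo M (by
      intro d hd
      exact haper s d fun n h1 h2 => hd n h1 h2)
    exact ⟨b * b, fun n hn => subm_cofinite M ha hb hab n hn⟩
  have hpair : ∀ s s' : S, ∃ N : ℕ, ∀ n, N ≤ n → 0 < (P ^ n) s s' := by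
    intro s s'
    obtain ⟨a, ha⟩ := hirr s s'
    obtain ⟨N, hN⟩ := hdiag s
    refine ⟨N + a, fun n hn => ?_⟩
    have h1 : 0 < (P ^ (n - a)) s s := hN _ (by omega)
    have := pow_pos_mul hP0 h1 ha
    rwa [Nat.sub_add_cancel (by omega)] at this
  choose Nf hNf using hpair
  refine ⟨1 + Finset.sup Finset.univ (fun p : S × S => Nf p.1 p.2), by omega, ?_⟩
  intro s s'
  refine hNf s s' _ ?_
  have : Nf s s' ≤ Finset.sup Finset.univ (fun p : S × S => Nf p.1 p.2) :=
    Finset.le_sup (f := fun p : S × S => Nf p.1 p.2) (Finset.mem_univ (s, s'))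
  omega

lemma sum_vecMul_eq (Q : Matrix S S ℝ) (hQ1 : ∀ s, ∑ t : S, Q s t = 1) (x : S → ℝ) :
    ∑ t : S, Matrix.vecMul x Q t = ∑ s : S, x s := by
  simp only [Matrix.vecMul, dotProduct]
  rw [Finset.sum_comm]
  exact Finset.sum_congr rfl fun s _ => by rw [← Finset.mul_sum, hQ1 s, mul_one]

lemma tv_le (Q : Matrix S S ℝ) (hQ0 : ∀ s t, 0 ≤ Q s t) (hQ1 : ∀ s, ∑ t : S, Q s t = 1)
    (x : S → ℝ) : ∑ t : S, |Matrix.vecMul x Q t| ≤ ∑ s : S, |x s| := by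
  calc ∑ t : S, |Matrix.vecMul x Q t|
      ≤ ∑ t : S, ∑ s : S, |x s| * Q s t := by
        refine Finset.sum_le_sum fun t _ => ?_
        simp only [Matrix.vecMul, dotProduct]
        refine le_trans (Finset.abs_sum_le_sum_abs _ _) ?_
        refine Finset.sum_le_sum fun s _ => ?_
        rw [abs_mul, abs_of_nonneg (hQ0 s t)]
    _ = ∑ s : S, |x s| := by
        rw [Finset.sum_comm]
        exact Finset.sum_congr rfl fun s _ => by rw [← Finset.mul_sum, hQ1 s, mul_one]

lemma tv_contract (Q : Matrix S S ℝ) {ε : ℝ} (hε : ∀ s t, ε ≤ Q s t)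
    (hQ1 : ∀ s, ∑ t : S, Q s t = 1) (x : S → ℝ) (hx : ∑ s : S, x s = 0) :
    ∑ t : S, |Matrix.vecMul x Q t| ≤ (1 - (Fintype.card S : ℝ) * ε) * ∑ s : S, |x s| := by
  calc ∑ t : S, |Matrix.vecMul x Q t|
      ≤ ∑ t : S, ∑ s : S, |x s| * (Q s t - ε) := by
        refine Finset.sum_le_sum fun t _ => ?_
        have key : Matrix.vecMul x Q t = ∑ s : S, x s * (Q s t - ε) := by
          simp only [Matrix.vecMul, dotProduct, mul_sub]
          rw [Finset.sum_sub_distrib, ← Finset.sum_mul, hx, zero_mul, sub_zero]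
        rw [key]
        refine le_trans (Finset.abs_sum_le_sum_abs _ _) ?_
        refine Finset.sum_le_sum fun s _ => ?_
        rw [abs_mul, abs_of_nonneg (sub_nonneg.mpr (hε s t))]
    _ = (1 - (Fintype.card S : ℝ) * ε) * ∑ s : S, |x s| := by
        rw [Finset.sum_comm, Finset.mul_sum]
        refine Finset.sum_congr rfl fun s _ => ?_
        rw [← Finset.mul_sum]
        simp only [Finset.sum_sub_distrib, hQ1 s, Finset.sum_const, Finset.card_univ,
          nsmul_eq_mul]
        ring

lemma conv_to_stationary {P : Matrix S S ℝ}
    (hP0 : ∀ s s', 0 ≤ P s s') (hP1 : ∀ s, ∑ s' : S, P s s' = 1)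
    {N : ℕ} (hN : 1 ≤ N) (hpos : ∀ s s', 0 < (P ^ N) s s')
    (μ : S → ℝ) (hμstat : Matrix.vecMul μ P = μ)
    (ν : S → ℝ) (hsum : ∑ s : S, ν s = ∑ s : S, μ s) :
    ∀ s : S, Filter.Tendsto (fun n : ℕ => Matrix.vecMul ν (P ^ n) s) atTop (nhds (μ s)) := by
  classical
  have hP0n : ∀ n s s', 0 ≤ (P ^ n) s s' := pow_nonneg_ent hP0
  have hP1n : ∀ n s, ∑ s' : S, (P ^ n) s s' = 1 := fun n s => pow_rowsum hP1 n s
  set ε : ℝ := Finset.inf' Finset.univ (Finset.univ_nonempty)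
      (fun p : S × S => (P ^ N) p.1 p.2) with hε
  have hεle : ∀ s t, ε ≤ (P ^ N) s t := fun s t =>
    Finset.inf'_le _ (Finset.mem_univ (s, t))
  have hεpos : 0 < ε := by
    rw [hε, Finset.lt_inf'_iff]
    exact fun p _ => hpos p.1 p.2
  set ρ : ℝ := 1 - (Fintype.card S : ℝ) * ε with hρ
  have hcard : 0 < (Fintype.card S : ℝ) := by
    have := Fintype.card_pos (α := S); positivity
  have hρ1 : ρ < 1 := by
    rw [hρ]; nlinarith
  have hρ0 : 0 ≤ ρ := by
    obtain ⟨s0⟩ := (inferInstance : Nonempty S)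
    have h1 : (Fintype.card S : ℝ) * ε ≤ ∑ t : S, (P ^ N) s0 t := by
      rw [← Finset.card_univ, ← nsmul_eq_mul, ← Finset.sum_const]
      exact Finset.sum_le_sum fun t _ => hεle s0 t
    rw [hP1n N s0] at h1
    rw [hρ]; linarith
  set x : S → ℝ := ν - μ with hxdef
  have hx0 : ∑ s : S, x s = 0 := by
    simp only [hxdef, Pi.sub_apply, Finset.sum_sub_distrib, hsum, sub_self]
  have hμpow : ∀ n, Matrix.vecMul μ (P ^ n) = μ := by
    intro n
    induction n with
    | zero => simp
    | succ n ih => rw [pow_succ, ← Matrix.vecMul_vecMul, ih, hμstat]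
  set T : ℕ → ℝ := fun n => ∑ s : S, |Matrix.vecMul x (P ^ n) s| with hT
  have hxsum : ∀ n, ∑ s : S, Matrix.vecMul x (P ^ n) s = 0 := by
    intro n; rw [sum_vecMul_eq _ (hP1n n), hx0]
  have hstep : ∀ n, T (n + 1) ≤ T n := by
    intro n
    have : Matrix.vecMul x (P ^ (n + 1)) = Matrix.vecMul (Matrix.vecMul x (P ^ n)) P := by
      rw [pow_succ, ← Matrix.vecMul_vecMul]
    simp only [hT, this]
    exact tv_le P hP0 hP1 _
  have hmono : ∀ a b, a ≤ b → T b ≤ T a := by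
    intro a b hab
    induction b with
    | zero => simp_all
    | succ b ih =>
      rcases Nat.lt_or_ge a (b+1) with h | h
      · exact le_trans (hstep b) (ih (by omega))
      · have : a = b + 1 := by omega
        subst this; rfl
  have hNstep : ∀ n, T (n + N) ≤ ρ * T n := by
    intro n
    have heq : Matrix.vecMul x (P ^ (n + N)) =
        Matrix.vecMul (Matrix.vecMul x (P ^ n)) (P ^ N) := by
      rw [pow_add, ← Matrix.vecMul_vecMul]
    simp only [hT, heq]
    exact tv_contract (P ^ N) hεle (hP1n N) _ (hxsum n)
  have hgeom : ∀ k, T (N * k) ≤ ρ ^ k * T 0 := by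
    intro k
    induction k with
    | zero => simp
    | succ k ih =>
      have h1 : T (N * (k + 1)) ≤ ρ * T (N * k) := by
        have : N * (k + 1) = N * k + N := by ring
        rw [this]; exact hNstep (N * k)
      calc T (N * (k + 1)) ≤ ρ * T (N * k) := h1
        _ ≤ ρ * (ρ ^ k * T 0) := by
            exact mul_le_mul_of_nonneg_left ih hρ0
        _ = ρ ^ (k + 1) * T 0 := by ring
  have hbound : ∀ n, T n ≤ ρ ^ (n / N) * T 0 := by
    intro n
    have h1 : N * (n / N) ≤ n := Nat.mul_div_le n N
    exact le_trans (hmono _ _ h1) (hgeom (n / N))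
  intro s
  have hdiff : ∀ n, Matrix.vecMul ν (P ^ n) s - μ s = Matrix.vecMul x (P ^ n) s := by
    intro n
    rw [hxdef, Matrix.sub_vecMul, hμpow n]
    simp
  have habs : ∀ n, |Matrix.vecMul ν (P ^ n) s - μ s| ≤ ρ ^ (n / N) * T 0 := by
    intro n
    rw [hdiff n]
    refine le_trans ?_ (hbound n)
    simp only [hT]
    exact Finset.single_le_sum (f := fun t : S => |Matrix.vecMul x (P ^ n) t|)
      (fun t _ => abs_nonneg _) (Finset.mem_univ s)
  have hgo : Filter.Tendsto (fun n : ℕ => ρ ^ (n / N) * T 0) atTop (nhds 0) := by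
    have hdiv : Filter.Tendsto (fun n : ℕ => n / N) atTop atTop := by
      refine Filter.tendsto_atTop_atTop.mpr fun k => ⟨N * k, fun n hn => ?_⟩
      exact (Nat.le_div_iff_mul_le (by omega)).mpr (by rw [mul_comm]; exact hn)
    have := (tendsto_pow_atTop_nhds_zero_of_lt_one hρ0 hρ1).comp hdiv
    simpa using this.mul_const (T 0)
  have h0 : Filter.Tendsto (fun n : ℕ => Matrix.vecMul ν (P ^ n) s - μ s) atTop (nhds 0) :=
    squeeze_zero_norm (fun n => by simpa using habs n) hgo
  have := h0.add (tendsto_const_nhds (x := μ s))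
  simpa using this

end Aux

theorem stmt_13 {S : Type*} [Fintype S] [DecidableEq S] [Nonempty S]
    {m : ℕ} (A : Fin m → Finset S)
    (hpart : ∀ s : S, ∃! i : Fin m, s ∈ A i)
    (hne : ∀ i, (A i).Nonempty)
    (P : Matrix S S ℝ)
    (hP0 : ∀ s s' : S, 0 ≤ P s s')
    (hP1 : ∀ s : S, ∑ s' : S, P s s' = 1)
    (α : Fin m → S → ℝ)
    (hα0 : ∀ i, ∀ s : S, s ∉ A i → α i s = 0)
    (hαpos : ∀ i, ∀ s ∈ A i, 0 < α i s)
    (hα1 : ∀ i, ∑ s ∈ A i, α i s = 1)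
    (Pt : Matrix (Fin m) (Fin m) ℝ)
    (hPt : ∀ i j : Fin m, ∀ s ∈ A j,
      Pt i j = (∑ s' ∈ A i, α i s' * P s' s) / α j s)
    (hirr : ∀ s s' : S, ∃ n : ℕ, 0 < (P ^ n) s s')
    (haper : ∀ s : S, ∀ d : ℕ, (∀ n : ℕ, 1 ≤ n → 0 < (P ^ n) s s → d ∣ n) → d = 1)
    (μ : S → ℝ) (hμ0 : ∀ s : S, 0 ≤ μ s) (hμ1 : ∑ s : S, μ s = 1)
    (hμstat : Matrix.vecMul μ P = μ)
    (π : S → ℝ) (hπ0 : ∀ s : S, 0 ≤ π s) (hπ1 : ∑ s : S, π s = 1) :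
    (∀ i : Fin m,
        Filter.Tendsto (fun n : ℕ =>
          Matrix.vecMul (fun i' => ∑ s ∈ A i', π s) (Pt ^ n) i
            - ∑ s ∈ A i, Matrix.vecMul π (P ^ n) s)
          Filter.atTop (nhds 0)) ∧
      (∀ i : Fin m, ∀ s ∈ A i,
        Filter.Tendsto (fun n : ℕ =>
          Matrix.vecMul π (P ^ n) s
            / Matrix.vecMul (fun i' => ∑ s' ∈ A i', π s') (Pt ^ n) i)
          Filter.atTop (nhds (α i s))) := by
  classical
  -- the index function
  have hidx0 : ∀ s : S, ∃ i : Fin m, s ∈ A i := fun s => ⟨(hpart s).choose, (hpart s).choose_spec.1⟩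
  set idx : S → Fin m := fun s => (hpart s).choose with hidxdef
  have hidx : ∀ s, s ∈ A (idx s) := fun s => (hpart s).choose_spec.1
  have huniq : ∀ s i, s ∈ A i → i = idx s := fun s i hi => (hpart s).choose_spec.2 i hi
  -- splitting sums over the partition
  have hsplit : ∀ f : S → ℝ, ∑ i : Fin m, ∑ s ∈ A i, f s = ∑ s : S, f s := by
    intro f
    calc ∑ i : Fin m, ∑ s ∈ A i, f s
        = ∑ i : Fin m, ∑ s : S, if s ∈ A i then f s else 0 := by
          refine Finset.sum_congr rfl fun i _ => ?_
          rw [Finset.sum_ite_mem, Finset.univ_inter]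
      _ = ∑ s : S, ∑ i : Fin m, if s ∈ A i then f s else 0 := Finset.sum_comm
      _ = ∑ s : S, f s := by
          refine Finset.sum_congr rfl fun s _ => ?_
          rw [Finset.sum_eq_single (idx s)]
          · rw [if_pos (hidx s)]
          · intro j _ hj
            rw [if_neg (fun hmem => hj ((huniq s j hmem) ▸ rfl))]
          · intro h; exact absurd (Finset.mem_univ _) h
  -- basic facts about Pt
  have hPtval : ∀ i j, ∀ s ∈ A j, α j s * Pt i j = ∑ s' ∈ A i, α i s' * P s' s := by
    intro i j s hs
    rw [hPt i j s hs, mul_div_cancel₀ _ (ne_of_gt (hαpos j s hs))]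
  -- the lift of a measure on Fin m
  set lift : (Fin m → ℝ) → (S → ℝ) := fun g s => g (idx s) * α (idx s) s with hliftdef
  have hliftsum : ∀ g : Fin m → ℝ, ∑ s : S, lift g s = ∑ i : Fin m, g i := by
    intro g
    rw [← hsplit (lift g)]
    refine Finset.sum_congr rfl fun i _ => ?_
    calc ∑ s ∈ A i, lift g s = ∑ s ∈ A i, g i * α i s := by
          refine Finset.sum_congr rfl fun s hs => ?_
          simp only [hliftdef]
          rw [← huniq s i hs]
      _ = g i := by rw [← Finset.mul_sum, hα1 i, mul_one]
  have hliftstep : ∀ g : Fin m → ℝ,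
      Matrix.vecMul (lift g) P = lift (Matrix.vecMul g Pt) := by
    intro g
    funext s
    simp only [Matrix.vecMul, dotProduct, hliftdef]
    calc ∑ s' : S, g (idx s') * α (idx s') s' * P s' s
        = ∑ i : Fin m, ∑ s' ∈ A i, g (idx s') * α (idx s') s' * P s' s := (hsplit _).symm
      _ = ∑ i : Fin m, g i * (α (idx s) s * Pt i (idx s)) := by
          refine Finset.sum_congr rfl fun i _ => ?_
          rw [hPtval i (idx s) s (hidx s), Finset.mul_sum]
          refine Finset.sum_congr rfl fun s' hs' => ?_
          rw [← huniq s' i hs']; ring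
      _ = (∑ i : Fin m, g i * Pt i (idx s)) * α (idx s) s := by
          rw [Finset.sum_mul]; exact Finset.sum_congr rfl fun i _ => by ring
  have hliftpow : ∀ g : Fin m → ℝ, ∀ n : ℕ,
      Matrix.vecMul (lift g) (P ^ n) = lift (Matrix.vecMul g (Pt ^ n)) := by
    intro g n
    induction n with
    | zero => simp
    | succ n ih =>
      rw [pow_succ, pow_succ, ← Matrix.vecMul_vecMul, ih, hliftstep,
        ← Matrix.vecMul_vecMul]
  have hkey : ∀ g : Fin m → ℝ, ∀ n : ℕ, ∀ i : Fin m,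
      Matrix.vecMul g (Pt ^ n) i = ∑ s ∈ A i, Matrix.vecMul (lift g) (P ^ n) s := by
    intro g n i
    rw [hliftpow g n]
    calc Matrix.vecMul g (Pt ^ n) i
        = ∑ s ∈ A i, Matrix.vecMul g (Pt ^ n) i * α i s := by
          rw [← Finset.mul_sum, hα1 i, mul_one]
      _ = ∑ s ∈ A i, lift (Matrix.vecMul g (Pt ^ n)) s := by
          refine Finset.sum_congr rfl fun s hs => ?_
          simp only [hliftdef]
          rw [← huniq s i hs]
  -- primitivity and convergence
  obtain ⟨N, hN1, hNpos⟩ := exists_primitive hP0 hirr haper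
  have hconv : ∀ ν : S → ℝ, (∑ s : S, ν s = 1) →
      ∀ s : S, Filter.Tendsto (fun n : ℕ => Matrix.vecMul ν (P ^ n) s) atTop (nhds (μ s)) := by
    intro ν hν s
    exact conv_to_stationary hP0 hP1 hN1 hNpos μ hμstat ν (by rw [hν, hμ1]) s
  -- positivity of μ
  have hμpow : ∀ n, Matrix.vecMul μ (P ^ n) = μ := by
    intro n
    induction n with
    | zero => simp
    | succ n ih => rw [pow_succ, ← Matrix.vecMul_vecMul, ih, hμstat]
  have hμpos : ∀ s : S, 0 < μ s := by
    intro s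
    obtain ⟨t0, ht0⟩ : ∃ t0 : S, 0 < μ t0 := by
      by_contra h
      push_neg at h
      have : ∑ t : S, μ t ≤ 0 := Finset.sum_nonpos fun t _ => h t
      rw [hμ1] at this; linarith
    have h1 : μ s = ∑ t : S, μ t * (P ^ N) t s := by
      conv_lhs => rw [← hμpow N]
      simp [Matrix.vecMul, dotProduct]
    rw [h1]
    have hterm : 0 < μ t0 * (P ^ N) t0 s := mul_pos ht0 (hNpos t0 s)
    refine lt_of_lt_of_le hterm ?_
    exact Finset.single_le_sum (fun t _ => mul_nonneg (hμ0 t)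
      (le_of_lt (hNpos t s))) (Finset.mem_univ t0)
  -- block masses of μ
  set μA : Fin m → ℝ := fun i => ∑ s ∈ A i, μ s with hμAdef
  have hμApos : ∀ i, 0 < μA i := by
    intro i
    obtain ⟨s, hs⟩ := hne i
    exact Finset.sum_pos' (fun t _ => le_of_lt (hμpos t)) ⟨s, hs, hμpos s⟩
  -- the lifted initial distributions
  set πt : Fin m → ℝ := fun i => ∑ s ∈ A i, π s with hπtdef
  have hνπ1 : ∑ s : S, lift πt s = 1 := by
    rw [hliftsum, hπtdef]
    simp only []
    rw [hsplit π, hπ1]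
  -- convergence of the lumped chain values
  have hlump : ∀ i : Fin m,
      Filter.Tendsto (fun n : ℕ => Matrix.vecMul πt (Pt ^ n) i) atTop (nhds (μA i)) := by
    intro i
    have : ∀ n, Matrix.vecMul πt (Pt ^ n) i = ∑ s ∈ A i, Matrix.vecMul (lift πt) (P ^ n) s :=
      fun n => hkey πt n i
    simp only [this]
    have := fun s (_ : s ∈ A i) => hconv (lift πt) hνπ1 s
    exact tendsto_finset_sum (A i) fun s hs => hconv (lift πt) hνπ1 s
  -- μ restricted is proportional to α : μ s = α i s * μA i
  have hμalpha : ∀ i : Fin m, ∀ s ∈ A i, μ s = α i s * μA i := by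
    intro i s hs
    set μt : Fin m → ℝ := fun j => ∑ t ∈ A j, μ t with hμtdef
    have hνμ1 : ∑ t : S, lift μt t = 1 := by
      rw [hliftsum, hμtdef]
      simp only []
      rw [hsplit μ, hμ1]
    -- limit of vecMul (lift μt) (P^n) s is μ s
    have h1 : Filter.Tendsto (fun n : ℕ => Matrix.vecMul (lift μt) (P ^ n) s)
        atTop (nhds (μ s)) := hconv (lift μt) hνμ1 s
    -- but that function equals α i s * vecMul μt (Pt^n) i
    have h2 : ∀ n, Matrix.vecMul (lift μt) (P ^ n) s
        = Matrix.vecMul μt (Pt ^ n) (idx s) * α (idx s) s := by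
      intro n
      rw [hliftpow μt n]
    -- and vecMul μt (Pt^n) i → μA i
    have h3 : Filter.Tendsto (fun n : ℕ => Matrix.vecMul μt (Pt ^ n) i) atTop (nhds (μA i)) := by
      have heq : ∀ n, Matrix.vecMul μt (Pt ^ n) i
          = ∑ t ∈ A i, Matrix.vecMul (lift μt) (P ^ n) t := fun n => hkey μt n i
      simp only [heq]
      have hlim : ∀ t ∈ A i, Filter.Tendsto (fun n : ℕ => Matrix.vecMul (lift μt) (P ^ n) t)
          atTop (nhds (μ t)) := fun t _ => hconv (lift μt) hνμ1 t
      exact tendsto_finset_sum (A i) hlim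
    have his : idx s = i := (huniq s i hs).symm
    have h4 : Filter.Tendsto (fun n : ℕ => Matrix.vecMul (lift μt) (P ^ n) s)
        atTop (nhds (μA i * α i s)) := by
      simp only [h2, his]
      exact h3.mul_const (α i s)
    have := tendsto_nhds_unique h1 h4
    rw [this]; ring
  constructor
  · -- part (i)
    intro i
    have heq : ∀ n : ℕ,
        Matrix.vecMul (fun i' => ∑ s ∈ A i', π s) (Pt ^ n) i
          - ∑ s ∈ A i, Matrix.vecMul π (P ^ n) s
        = Matrix.vecMul πt (Pt ^ n) i - ∑ s ∈ A i, Matrix.vecMul π (P ^ n) s := by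
      intro n; rfl
    have h1 := hlump i
    have h2 : Filter.Tendsto (fun n : ℕ => ∑ s ∈ A i, Matrix.vecMul π (P ^ n) s)
        atTop (nhds (μA i)) := by
      have : (μA i) = ∑ s ∈ A i, μ s := rfl
      rw [this]
      exact tendsto_finset_sum (A i) fun s _ => hconv π hπ1 s
    have := h1.sub h2
    simpa using this
  · -- part (ii)
    intro i s hs
    have h1 : Filter.Tendsto (fun n : ℕ => Matrix.vecMul π (P ^ n) s)
        atTop (nhds (μ s)) := hconv π hπ1 s
    have h2 : Filter.Tendsto (fun n : ℕ =>
        Matrix.vecMul (fun i' => ∑ s' ∈ A i', π s') (Pt ^ n) i) atTop (nhds (μA i)) := hlump i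
    have hdiv := h1.div h2 (ne_of_gt (hμApos i))
    have : μ s / μA i = α i s := by
      rw [hμalpha i s hs]
      exact mul_div_cancel_right₀ _ (ne_of_gt (hμApos i))
    rwa [this] at hdiv
end

section
/- Under condition (Cond2), the aggregated matrix Q̃ is a generator matrix: its off-diagonal entries are nonnegative and each of its rows sums to 0, i.e. for every i, ∑_{j=1}^m Q̃(A_i, A_j) = 0. -/
open Finset Matrix Filter

theorem stmt_14 {S : Type*} [Fintype S] [DecidableEq S] [Nonempty S]
    {m : ℕ} (A : Fin m → Finset S)
    (hpart : ∀ s : S, ∃! i : Fin m, s ∈ A i)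
    (hne : ∀ i, (A i).Nonempty)
    (Q : Matrix S S ℝ)
    (hQ0 : ∀ s s' : S, s ≠ s' → 0 ≤ Q s s')
    (hQrow : ∀ s : S, ∑ s' : S, Q s s' = 0)
    (α : Fin m → S → ℝ)
    (hα0 : ∀ i, ∀ s : S, s ∉ A i → α i s = 0)
    (hαpos : ∀ i, ∀ s ∈ A i, 0 < α i s)
    (hα1 : ∀ i, ∑ s ∈ A i, α i s = 1)
    (Qt : Matrix (Fin m) (Fin m) ℝ)
    (hQt : ∀ i j : Fin m, ∀ s ∈ A j,
      Qt i j = (∑ s' ∈ A i, α i s' * Q s' s) / α j s) :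
    (∀ i j : Fin m, i ≠ j → 0 ≤ Qt i j) ∧ (∀ i : Fin m, ∑ j : Fin m, Qt i j = 0) := by
  have hdisj : ∀ i j : Fin m, i ≠ j → Disjoint (A i) (A j) := by
    intro i j hij
    rw [Finset.disjoint_left]
    intro s hsi hsj
    obtain ⟨k, _, hk⟩ := hpart s
    exact hij ((hk i hsi).trans (hk j hsj).symm)
  have huniv : (Finset.univ : Finset S) = Finset.univ.biUnion A := by
    ext s
    simp only [Finset.mem_univ, Finset.mem_biUnion, true_iff]
    obtain ⟨k, hk, _⟩ := hpart s
    exact ⟨k, trivial, hk⟩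
  constructor
  · intro i j hij
    obtain ⟨s, hs⟩ := hne j
    rw [hQt i j s hs]
    apply div_nonneg _ (hαpos j s hs).le
    apply Finset.sum_nonneg
    intro s' hs'
    have hne' : s' ≠ s := by
      intro h
      obtain ⟨k, _, hk⟩ := hpart s'
      exact hij ((hk i hs').trans (hk j (h ▸ hs)).symm)
    exact mul_nonneg (hαpos i s' hs').le (hQ0 s' s hne')
  · intro i
    have key : ∀ j : Fin m, Qt i j = ∑ s ∈ A j, ∑ s' ∈ A i, α i s' * Q s' s := by
      intro j
      calc Qt i j = ∑ s ∈ A j, α j s * Qt i j := by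
            rw [← Finset.sum_mul, hα1, one_mul]
        _ = ∑ s ∈ A j, ∑ s' ∈ A i, α i s' * Q s' s := by
            apply Finset.sum_congr rfl
            intro s hs
            rw [hQt i j s hs, mul_div_cancel₀ _ (hαpos j s hs).ne']
    calc ∑ j, Qt i j = ∑ j, ∑ s ∈ A j, ∑ s' ∈ A i, α i s' * Q s' s := by
          exact Finset.sum_congr rfl fun j _ => key j
      _ = ∑ s : S, ∑ s' ∈ A i, α i s' * Q s' s := by
          rw [huniv, Finset.sum_biUnion]
          intro a _ b _ hab
          exact hdisj a b hab
      _ = ∑ s' ∈ A i, α i s' * ∑ s : S, Q s' s := by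
          rw [Finset.sum_comm]
          simp [Finset.mul_sum]
      _ = 0 := by simp [hQrow]
end

section
/- (Continuous-time lumpability and invertibility) Assume condition (Cond2) holds and that the initial probability distribution π on S respects {α_i}; let π̃(A_i) = π(A_i). Then for all t ≥ 0: (i) (π̃ · exp(tQ̃))(A_i) = (π · exp(tQ))(A_i) for every i; and (ii) (π · exp(tQ))(s) = (π̃ · exp(tQ̃))(A_i) · α_i(s) for every i and s ∈ A_i, where exp denotes the matrix exponential. -/
open Finset Matrix Filter

lemma mul_exp_intertwine {n1 n2 : Type*} [Fintype n1] [DecidableEq n1]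
    [Fintype n2] [DecidableEq n2]
    (B : Matrix n2 n1 ℝ) (Q : Matrix n1 n1 ℝ) (Qt : Matrix n2 n2 ℝ)
    (h : B * Q = Qt * B) :
    B * NormedSpace.exp Q = NormedSpace.exp Qt * B := by
  letI : SeminormedRing (Matrix n1 n1 ℝ) := Matrix.linftyOpSemiNormedRing
  letI : NormedRing (Matrix n1 n1 ℝ) := Matrix.linftyOpNormedRing
  letI : NormedAlgebra ℝ (Matrix n1 n1 ℝ) := Matrix.linftyOpNormedAlgebra
  letI : SeminormedRing (Matrix n2 n2 ℝ) := Matrix.linftyOpSemiNormedRing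
  letI : NormedRing (Matrix n2 n2 ℝ) := Matrix.linftyOpNormedRing
  letI : NormedAlgebra ℝ (Matrix n2 n2 ℝ) := Matrix.linftyOpNormedAlgebra
  letI : NormedAddCommGroup (Matrix n2 n1 ℝ) := Matrix.linftyOpNormedAddCommGroup
  letI : NormedSpace ℝ (Matrix n2 n1 ℝ) := Matrix.linftyOpNormedSpace
  have hpow : ∀ k : ℕ, B * Q ^ k = Qt ^ k * B := by
    intro k
    induction k with
    | zero => simp
    | succ k ih =>
      rw [pow_succ, pow_succ, ← Matrix.mul_assoc, ih, Matrix.mul_assoc, h,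
        ← Matrix.mul_assoc]
  let f : Matrix n1 n1 ℝ →L[ℝ] Matrix n2 n1 ℝ :=
    LinearMap.toContinuousLinearMap
      { toFun := fun X => B * X
        map_add' := fun X Y => Matrix.mul_add B X Y
        map_smul' := fun c X => (Matrix.mul_smul B c X) }
  let g : Matrix n2 n2 ℝ →L[ℝ] Matrix n2 n1 ℝ :=
    LinearMap.toContinuousLinearMap
      { toFun := fun Y => Y * B
        map_add' := fun X Y => Matrix.add_mul X Y B
        map_smul' := fun c X => (Matrix.smul_mul c X B) }
  have hf : B * NormedSpace.exp Q = f (NormedSpace.exp Q) := rfl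
  have hg : NormedSpace.exp Qt * B = g (NormedSpace.exp Qt) := rfl
  rw [hf, hg, NormedSpace.exp_eq_tsum (𝕂 := ℝ), NormedSpace.exp_eq_tsum (𝕂 := ℝ),
    f.map_tsum (NormedSpace.expSeries_summable' (𝕂 := ℝ) Q),
    g.map_tsum (NormedSpace.expSeries_summable' (𝕂 := ℝ) Qt)]
  refine tsum_congr fun k => ?_
  show B * (((Nat.factorial k : ℝ))⁻¹ • Q ^ k) = (((Nat.factorial k : ℝ))⁻¹ • Qt ^ k) * B
  rw [Matrix.mul_smul, Matrix.smul_mul, hpow]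

theorem stmt_16 {S : Type*} [Fintype S] [DecidableEq S] [Nonempty S]
    {m : ℕ} (A : Fin m → Finset S)
    (hpart : ∀ s : S, ∃! i : Fin m, s ∈ A i)
    (hne : ∀ i, (A i).Nonempty)
    (Q : Matrix S S ℝ)
    (hQ0 : ∀ s s' : S, s ≠ s' → 0 ≤ Q s s')
    (hQrow : ∀ s : S, ∑ s' : S, Q s s' = 0)
    (α : Fin m → S → ℝ)
    (hα0 : ∀ i, ∀ s : S, s ∉ A i → α i s = 0)
    (hαpos : ∀ i, ∀ s ∈ A i, 0 < α i s)
    (hα1 : ∀ i, ∑ s ∈ A i, α i s = 1)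
    (Qt : Matrix (Fin m) (Fin m) ℝ)
    (hQt : ∀ i j : Fin m, ∀ s ∈ A j,
      Qt i j = (∑ s' ∈ A i, α i s' * Q s' s) / α j s)
    (π : S → ℝ) (hπ0 : ∀ s : S, 0 ≤ π s) (hπ1 : ∑ s : S, π s = 1)
    (hresp : ∀ i : Fin m, ∀ s ∈ A i, π s = α i s * ∑ s' ∈ A i, π s') :
    ∀ t : ℝ, 0 ≤ t →
      (∀ i : Fin m,
        Matrix.vecMul (fun i' => ∑ s ∈ A i', π s) (NormedSpace.exp (t • Qt)) i
          = ∑ s ∈ A i, Matrix.vecMul π (NormedSpace.exp (t • Q)) s) ∧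
      (∀ i : Fin m, ∀ s ∈ A i,
        Matrix.vecMul π (NormedSpace.exp (t • Q)) s
          = Matrix.vecMul (fun i' => ∑ s' ∈ A i', π s') (NormedSpace.exp (t • Qt)) i * α i s) := by
  classical
  intro t ht
  -- the index of the block containing s
  have hidx : ∀ s : S, s ∈ A ((hpart s).choose) := fun s => (hpart s).choose_spec.1
  set idx : S → Fin m := fun s => (hpart s).choose with hidx_def
  have hidx_eq : ∀ (i : Fin m) (s : S), s ∈ A i → idx s = i :=
    fun i s hs => ((hpart s).choose_spec.2 i hs).symm
  have hα_zero : ∀ (i : Fin m) (s : S), i ≠ idx s → α i s = 0 := by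
    intro i s h
    refine hα0 i s fun hs => h (hidx_eq i s hs).symm
  -- the lifting matrix
  set B : Matrix (Fin m) S ℝ := Matrix.of (fun i s => α i s) with hB
  have hBQ : B * Q = Qt * B := by
    ext i s
    have h1 : (B * Q) i s = ∑ s' ∈ A i, α i s' * Q s' s := by
      rw [Matrix.mul_apply]
      refine (Finset.sum_subset (Finset.subset_univ (A i)) ?_).symm
      intro x _ hx
      simp [hB, hα0 i x hx]
    have h2 : (Qt * B) i s = Qt i (idx s) * α (idx s) s := by
      rw [Matrix.mul_apply]
      refine Finset.sum_eq_single (idx s) ?_ (by simp)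
      intro j _ hj
      simp [hB, hα_zero j s hj]
    rw [h1, h2, hQt i (idx s) s (hidx s),
      div_mul_cancel₀ _ (hαpos (idx s) s (hidx s)).ne']
  have hBtQ : B * (t • Q) = (t • Qt) * B := by
    rw [Matrix.mul_smul, hBQ, Matrix.smul_mul]
  have hexp : B * NormedSpace.exp (t • Q) = NormedSpace.exp (t • Qt) * B :=
    mul_exp_intertwine B (t • Q) (t • Qt) hBtQ
  set πt : Fin m → ℝ := fun i => ∑ s ∈ A i, π s with hπt
  have hπB : Matrix.vecMul πt B = π := by
    funext s
    rw [Matrix.vecMul, dotProduct]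
    have : ∀ j ∈ Finset.univ, j ≠ idx s → πt j * B j s = 0 := by
      intro j _ hj
      simp [hB, hα_zero j s hj]
    rw [Finset.sum_eq_single (idx s) this (by simp)]
    rw [hresp (idx s) s (hidx s)]
    simp [hB, πt, mul_comm]
  have key : ∀ s : S, Matrix.vecMul π (NormedSpace.exp (t • Q)) s
      = Matrix.vecMul πt (NormedSpace.exp (t • Qt)) (idx s) * α (idx s) s := by
    intro s
    conv_lhs => rw [← hπB]
    rw [Matrix.vecMul_vecMul, hexp, ← Matrix.vecMul_vecMul]
    rw [Matrix.vecMul, dotProduct]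
    refine Finset.sum_eq_single (idx s) ?_ (by simp)
    intro j _ hj
    simp [hB, hα_zero j s hj]
  constructor
  · intro i
    have : ∀ s ∈ A i, Matrix.vecMul π (NormedSpace.exp (t • Q)) s
        = Matrix.vecMul πt (NormedSpace.exp (t • Qt)) i * α i s := by
      intro s hs
      rw [key s, hidx_eq i s hs]
    rw [Finset.sum_congr rfl this, ← Finset.mul_sum, hα1, mul_one]
  · intro i s hs
    rw [key s, hidx_eq i s hs]
end

section
/- (Continuous-time convergence) Assume condition (Cond2) holds, Q is irreducible (for all s, s' ∈ S there exists t > 0 with (exp(tQ))(s, s') > 0), and μ is a stationary distribution of Q (μQ = 0). Let μ̃(A_i) = μ(A_i). Then μ̃ Q̃ = 0, i.e. μ̃ is stationary for Q̃. Moreover, for any initial probability distribution π on S with π̃(A_i) = π(A_i), as t → ∞: (i) (π̃ · exp(tQ̃))(A_i) − (π · exp(tQ))(A_i) → 0 for every i; and (ii) (π · exp(tQ))(s) / (π̃ · exp(tQ̃))(A_i) → α_i(s) for every i and s ∈ A_i. -/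
open Finset Matrix Filter NormedSpace
open scoped Nat

lemma aux_summable {n : Type*} [Fintype n] [DecidableEq n] (X : Matrix n n ℝ) :
    Summable (fun k : ℕ => (k !⁻¹ : ℝ) • X ^ k) := by
  letI : SeminormedRing (Matrix n n ℝ) := Matrix.linftyOpSemiNormedRing
  letI : NormedRing (Matrix n n ℝ) := Matrix.linftyOpNormedRing
  letI : NormedAlgebra ℝ (Matrix n n ℝ) := Matrix.linftyOpNormedAlgebra
  exact NormedSpace.expSeries_summable' X

lemma aux_clm_exp {n : Type*} [Fintype n] [DecidableEq n]
    {E : Type*} [NormedAddCommGroup E] [NormedSpace ℝ E]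
    (f : Matrix n n ℝ →ₗ[ℝ] E) (X : Matrix n n ℝ) :
    f (exp X) = ∑' k : ℕ, (k !⁻¹ : ℝ) • f (X ^ k) := by
  letI : SeminormedRing (Matrix n n ℝ) := Matrix.linftyOpSemiNormedRing
  letI : NormedRing (Matrix n n ℝ) := Matrix.linftyOpNormedRing
  letI : NormedAlgebra ℝ (Matrix n n ℝ) := Matrix.linftyOpNormedAlgebra
  have hf : Continuous f := LinearMap.continuous_of_finiteDimensional f
  let F : Matrix n n ℝ →L[ℝ] E := ⟨f, hf⟩
  have hs : Summable (fun k : ℕ => (k !⁻¹ : ℝ) • X ^ k) := NormedSpace.expSeries_summable' X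
  rw [exp_eq_tsum ℝ]
  show F _ = _
  rw [ContinuousLinearMap.map_tsum F hs]
  simp [F]

lemma aux_intertwine {n₁ n₂ : Type*} [Fintype n₁] [DecidableEq n₁] [Fintype n₂] [DecidableEq n₂]
    (X : Matrix n₁ n₁ ℝ) (Y : Matrix n₂ n₂ ℝ) (V : Matrix n₁ n₂ ℝ)
    (h : X * V = V * Y) : exp X * V = V * exp Y := by
  letI : NormedAddCommGroup (Matrix n₁ n₂ ℝ) := Matrix.normedAddCommGroup
  letI : NormedSpace ℝ (Matrix n₁ n₂ ℝ) := Matrix.normedSpace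
  have hpow : ∀ k : ℕ, X ^ k * V = V * Y ^ k := by
    intro k
    induction k with
    | zero => simp
    | succ k ih =>
      rw [pow_succ, pow_succ]
      rw [Matrix.mul_assoc, h, ← Matrix.mul_assoc, ih, Matrix.mul_assoc]
  have h1 := aux_clm_exp (E := Matrix n₁ n₂ ℝ)
    ⟨⟨fun M => M * V, fun a b => Matrix.add_mul a b V⟩, fun c a => by simp [Matrix.smul_mul]⟩ X
  have h2 := aux_clm_exp (E := Matrix n₁ n₂ ℝ)
    ⟨⟨fun M => V * M, fun a b => Matrix.mul_add V a b⟩, fun c a => by simp [Matrix.mul_smul]⟩ Y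
  simp only [LinearMap.coe_mk, AddHom.coe_mk] at h1 h2
  rw [h1, h2]
  exact tsum_congr fun k => by rw [hpow k]

lemma aux_entry_exp {n : Type*} [Fintype n] [DecidableEq n] (X : Matrix n n ℝ) (s s' : n) :
    exp X s s' = ∑' k : ℕ, (k !⁻¹ : ℝ) * ((X ^ k) s s') := by
  have h := aux_clm_exp (E := ℝ)
    ⟨⟨fun M => M s s', fun a b => rfl⟩, fun c a => rfl⟩ X
  exact h

lemma aux_entry_summable {n : Type*} [Fintype n] [DecidableEq n] (X : Matrix n n ℝ) (s s' : n) :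
    Summable (fun k : ℕ => (k !⁻¹ : ℝ) * ((X ^ k) s s')) := by
  have h := (aux_summable X).map
    (⟨⟨fun M : Matrix n n ℝ => M s s', rfl⟩, fun a b => rfl⟩ : Matrix n n ℝ →+ ℝ)
    (((continuous_apply s').comp (continuous_apply s)))
  exact h

lemma aux_exp_scalar {n : Type*} [Fintype n] [DecidableEq n] (r : ℝ) :
    exp (r • (1 : Matrix n n ℝ)) = Real.exp r • (1 : Matrix n n ℝ) := by
  rw [exp_eq_tsum ℝ]
  show (∑' k : ℕ, (k !⁻¹ : ℝ) • (r • (1 : Matrix n n ℝ)) ^ k) = _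
  have hsum : Summable fun k : ℕ => (k !⁻¹ : ℝ) * r ^ k := by
    simpa [div_eq_mul_inv, mul_comm] using Real.summable_pow_div_factorial r
  have : ∀ k : ℕ, (k !⁻¹ : ℝ) • (r • (1 : Matrix n n ℝ)) ^ k
      = ((k !⁻¹ : ℝ) * r ^ k) • (1 : Matrix n n ℝ) := by
    intro k
    rw [smul_pow, one_pow, smul_smul]
  rw [tsum_congr this, Summable.tsum_smul_const hsum]
  congr 1
  rw [Real.exp_eq_exp_ℝ, exp_eq_tsum ℝ]
  exact tsum_congr fun k => by rw [smul_eq_mul]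

section gen

variable {S : Type*} [Fintype S] [DecidableEq S] [Nonempty S] {Q : Matrix S S ℝ}

lemma aux_pow_rowsum (hQrow : ∀ s : S, ∑ s' : S, Q s s' = 0) :
    ∀ k : ℕ, 1 ≤ k → ∀ s : S, ∑ s' : S, (Q ^ k) s s' = 0 := by
  intro k
  induction k with
  | zero => intro h; omega
  | succ k ih =>
    intro _ s
    rcases Nat.eq_or_lt_of_le (Nat.one_le_iff_ne_zero.mpr (Nat.succ_ne_zero k)) with h | h
    · rcases Nat.succ_eq_one_add k ▸ h with h'
      have hk0 : k = 0 := by omega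
      subst hk0
      simpa using hQrow s
    · have hk1 : 1 ≤ k := by omega
      rw [pow_succ']
      simp only [Matrix.mul_apply]
      rw [Finset.sum_comm]
      have : ∀ u : S, ∑ s' : S, Q s u * (Q ^ k) u s' = 0 := by
        intro u
        rw [← Finset.mul_sum, ih hk1 u, mul_zero]
      simp [this]

lemma aux_exp_rowsum (hQrow : ∀ s : S, ∑ s' : S, Q s s' = 0) (t : ℝ) (s : S) :
    ∑ s' : S, exp (t • Q) s s' = 1 := by
  have h := aux_clm_exp (E := ℝ)
    ⟨⟨fun M : Matrix S S ℝ => ∑ s' : S, M s s', fun a b => by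
        simp [Matrix.add_apply, Finset.sum_add_distrib]⟩, fun c a => by
        simp [Matrix.smul_apply, smul_eq_mul, Finset.mul_sum]⟩ (t • Q)
  simp only [LinearMap.coe_mk, AddHom.coe_mk] at h
  rw [h, tsum_eq_single 0]
  · simp [Matrix.one_apply]
  · intro k hk
    have hk1 : 1 ≤ k := Nat.one_le_iff_ne_zero.mpr hk
    have : ∀ s' : S, ((t • Q) ^ k) s s' = t ^ k * (Q ^ k) s s' := by
      intro s'; rw [smul_pow]; simp
    rw [Finset.sum_congr rfl fun s' _ => this s', ← Finset.mul_sum,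
      aux_pow_rowsum hQrow k hk1 s]
    simp

lemma aux_vecMul_exp_stat {μ : S → ℝ} (hμstat : Matrix.vecMul μ Q = 0) (t : ℝ) :
    Matrix.vecMul μ (exp (t • Q)) = μ := by
  funext s
  have h := aux_clm_exp (E := ℝ)
    ⟨⟨fun M : Matrix S S ℝ => Matrix.vecMul μ M s, fun a b => by
        simp [Matrix.vecMul, dotProduct, Matrix.add_apply, mul_add,
          Finset.sum_add_distrib]⟩, fun c a => by
        simp [Matrix.vecMul, dotProduct, Matrix.smul_apply, smul_eq_mul,
          Finset.mul_sum]; ring_nf; simp [mul_comm, mul_left_comm]⟩ (t • Q)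
  simp only [LinearMap.coe_mk, AddHom.coe_mk] at h
  rw [h, tsum_eq_single 0]
  · simp
  · intro k hk
    obtain ⟨k, rfl⟩ := Nat.exists_eq_succ_of_ne_zero hk
    have hz : Matrix.vecMul μ (Q ^ (k + 1)) = 0 := by
      rw [pow_succ', ← Matrix.vecMul_vecMul, hμstat, Matrix.zero_vecMul]
    have : Matrix.vecMul μ ((t • Q) ^ (k + 1)) = 0 := by
      rw [smul_pow]
      have hsm : Matrix.vecMul μ (t ^ (k + 1) • Q ^ (k + 1))
          = t ^ (k + 1) • Matrix.vecMul μ (Q ^ (k + 1)) := by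
        ext s'
        simp [Matrix.vecMul, dotProduct, Matrix.smul_apply, Finset.mul_sum,
          mul_left_comm]
      rw [hsm, hz, smul_zero]
    rw [this]
    simp


lemma aux_pow_nonneg {B : Matrix S S ℝ} (hB : ∀ s s' : S, 0 ≤ B s s') :
    ∀ k : ℕ, ∀ s s' : S, 0 ≤ (B ^ k) s s' := by
  intro k
  induction k with
  | zero => intro s s'; by_cases h : s = s' <;> simp [pow_zero, Matrix.one_apply, h]
  | succ k ih =>
    intro s s'
    rw [pow_succ', Matrix.mul_apply]
    exact Finset.sum_nonneg fun u _ => mul_nonneg (hB s u) (ih u s')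

lemma aux_exp_entries (hQ0 : ∀ s s' : S, s ≠ s' → 0 ≤ Q s s') {t : ℝ} (ht : 0 ≤ t) :
    (∀ s s' : S, 0 ≤ exp (t • Q) s s') ∧ (∀ s : S, 0 < exp (t • Q) s s) := by
  set c : ℝ := ∑ s : S, |Q s s| with hc
  have hc0 : 0 ≤ c := Finset.sum_nonneg fun s _ => abs_nonneg _
  set B : Matrix S S ℝ := Q + c • (1 : Matrix S S ℝ) with hB
  have hBpos : ∀ s s' : S, 0 ≤ B s s' := by
    intro s s'
    by_cases h : s = s'
    · subst h
      have h1 : |Q s s| ≤ c :=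
        Finset.single_le_sum (fun u (_ : u ∈ Finset.univ) => abs_nonneg (Q u u))
          (Finset.mem_univ s)
      have : -Q s s ≤ c := le_trans (neg_le_abs _) h1
      simp only [hB, Matrix.add_apply, Matrix.smul_apply, Matrix.one_apply_eq, smul_eq_mul,
        mul_one]
      linarith
    · simp only [hB, Matrix.add_apply, Matrix.smul_apply, Matrix.one_apply_ne h, smul_eq_mul,
        mul_zero, add_zero]
      exact hQ0 s s' h
  have hdecomp : t • Q = (-(t * c)) • (1 : Matrix S S ℝ) + t • B := by
    rw [hB, smul_add, smul_smul]
    rw [neg_smul, neg_add_cancel_comm_assoc]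
  have hcomm : Commute ((-(t * c)) • (1 : Matrix S S ℝ)) (t • B) :=
    ((Commute.one_left (t • B)).smul_left _)
  have hexp : exp (t • Q)
      = Real.exp (-(t * c)) • (exp (t • B)) := by
    rw [hdecomp, Matrix.exp_add_of_commute _ _ hcomm, aux_exp_scalar, Matrix.smul_mul,
      Matrix.one_mul]
  have hBexp : ∀ s s' : S, 0 ≤ exp (t • B) s s' := by
    intro s s'
    rw [aux_entry_exp]
    refine tsum_nonneg fun k => ?_
    have : ((t • B) ^ k) s s' = t ^ k * ((B ^ k) s s') := by rw [smul_pow]; simp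
    rw [this]
    have := aux_pow_nonneg hBpos k s s'
    positivity
  have hBdiag : ∀ s : S, 1 ≤ exp (t • B) s s := by
    intro s
    rw [aux_entry_exp]
    have h0 : ((0:ℕ) !⁻¹ : ℝ) * (((t • B) ^ 0) s s) = 1 := by
      simp [Matrix.one_apply]
    rw [← h0]
    refine Summable.le_tsum (aux_entry_summable (t • B) s s) 0 fun k _ => ?_
    have : ((t • B) ^ k) s s = t ^ k * ((B ^ k) s s) := by rw [smul_pow]; simp
    rw [this]
    have := aux_pow_nonneg hBpos k s s
    positivity
  constructor
  · intro s s'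
    rw [hexp]
    simp only [Matrix.smul_apply, smul_eq_mul]
    exact mul_nonneg (Real.exp_pos _).le (hBexp s s')
  · intro s
    rw [hexp]
    simp only [Matrix.smul_apply, smul_eq_mul]
    exact mul_pos (Real.exp_pos _) (lt_of_lt_of_le one_pos (hBdiag s))

lemma aux_exp_le_one (hQ0 : ∀ s s' : S, s ≠ s' → 0 ≤ Q s s')
    (hQrow : ∀ s : S, ∑ s' : S, Q s s' = 0) {t : ℝ} (ht : 0 ≤ t) (s s' : S) :
    exp (t • Q) s s' ≤ 1 := by
  have h1 := aux_exp_rowsum hQrow t s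
  have h2 := (aux_exp_entries hQ0 ht).1
  calc exp (t • Q) s s' ≤ ∑ u : S, exp (t • Q) s u :=
        Finset.single_le_sum (fun u _ => h2 s u) (Finset.mem_univ s')
    _ = 1 := h1

lemma aux_exp_add (a b : ℝ) :
    exp ((a + b) • Q) = exp (a • Q) * exp (b • Q) := by
  rw [add_smul]
  exact Matrix.exp_add_of_commute _ _ (((Commute.refl Q).smul_left a).smul_right b)

lemma aux_pos_mono (hQ0 : ∀ s s' : S, s ≠ s' → 0 ≤ Q s s') {t₁ t : ℝ} (h0 : 0 ≤ t₁)
    (hle : t₁ ≤ t) {s s' : S} (hp : 0 < exp (t₁ • Q) s s') :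
    0 < exp (t • Q) s s' := by
  have hd : 0 ≤ t - t₁ := by linarith
  have hsplit : exp (t • Q) = exp (t₁ • Q) * exp ((t - t₁) • Q) := by
    rw [← aux_exp_add]
    congr 1
    ring_nf
  have hnn1 := (aux_exp_entries hQ0 h0).1
  have hnn2 := (aux_exp_entries hQ0 hd).1
  have hdiag := (aux_exp_entries hQ0 hd).2 s'
  rw [hsplit, Matrix.mul_apply]
  have hterm : 0 < exp (t₁ • Q) s s' * exp ((t - t₁) • Q) s' s' :=
    mul_pos hp hdiag
  calc (0:ℝ) < exp (t₁ • Q) s s' * exp ((t - t₁) • Q) s' s' := hterm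
    _ ≤ ∑ u : S, exp (t₁ • Q) s u * exp ((t - t₁) • Q) u s' :=
        Finset.single_le_sum (fun u _ => mul_nonneg (hnn1 s u) (hnn2 u s'))
          (Finset.mem_univ s')

lemma aux_global_time (hQ0 : ∀ s s' : S, s ≠ s' → 0 ≤ Q s s')
    (hirr : ∀ s s' : S, ∃ t : ℝ, 0 < t ∧ 0 < exp (t • Q) s s') :
    ∃ T : ℝ, 0 < T ∧ ∀ s s' : S, 0 < exp (T • Q) s s' := by
  choose tf htf0 htfp using hirr
  have hne : (Finset.univ : Finset (S × S)).Nonempty := Finset.univ_nonempty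
  set T : ℝ := Finset.univ.sup' hne (fun p : S × S => tf p.1 p.2) with hT
  have hTle : ∀ s s' : S, tf s s' ≤ T := fun s s' =>
    Finset.le_sup' (f := fun p : S × S => tf p.1 p.2) (Finset.mem_univ (s, s'))
  obtain ⟨s₀⟩ := (inferInstance : Nonempty S)
  refine ⟨T, lt_of_lt_of_le (htf0 s₀ s₀) (hTle s₀ s₀), fun s s' => ?_⟩
  exact aux_pos_mono hQ0 (htf0 s s').le (hTle s s') (htfp s s')

lemma aux_contract_sum {P : Matrix S S ℝ} (hProw : ∀ s : S, ∑ s' : S, P s s' = 1)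
    {v : S → ℝ} (hv : ∑ s : S, v s = 0) :
    ∑ s' : S, Matrix.vecMul v P s' = 0 := by
  simp only [Matrix.vecMul, dotProduct]
  rw [Finset.sum_comm]
  have : ∀ s : S, ∑ s' : S, v s * P s s' = v s := by
    intro s; rw [← Finset.mul_sum, hProw s, mul_one]
  rw [Finset.sum_congr rfl fun s _ => this s, hv]

lemma aux_contract {P : Matrix S S ℝ} {δ : ℝ} (hδ : 0 < δ)
    (hP : ∀ s s' : S, δ ≤ P s s') (hProw : ∀ s : S, ∑ s' : S, P s s' = 1)
    {v : S → ℝ} (hv : ∑ s : S, v s = 0) :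
    ∑ s' : S, |Matrix.vecMul v P s'| ≤ (1 - Fintype.card S * δ) * ∑ s : S, |v s| := by
  have key : ∀ s' : S, Matrix.vecMul v P s' = ∑ s : S, v s * (P s s' - δ) := by
    intro s'
    simp only [Matrix.vecMul, dotProduct, mul_sub]
    rw [Finset.sum_sub_distrib, ← Finset.sum_mul, hv, zero_mul, sub_zero]
  have habs : ∀ s' : S, |Matrix.vecMul v P s'| ≤ ∑ s : S, |v s| * (P s s' - δ) := by
    intro s'
    rw [key s']
    refine (Finset.abs_sum_le_sum_abs _ _).trans (le_of_eq ?_)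
    refine Finset.sum_congr rfl fun s _ => ?_
    rw [abs_mul, abs_of_nonneg (show (0:ℝ) ≤ P s s' - δ by linarith [hP s s'])]
  calc ∑ s' : S, |Matrix.vecMul v P s'| ≤ ∑ s' : S, ∑ s : S, |v s| * (P s s' - δ) :=
        Finset.sum_le_sum fun s' _ => habs s'
    _ = ∑ s : S, |v s| * (1 - Fintype.card S * δ) := by
        rw [Finset.sum_comm]
        refine Finset.sum_congr rfl fun s _ => ?_
        rw [← Finset.mul_sum, Finset.sum_sub_distrib, hProw s]
        simp [Finset.card_univ, mul_comm]
    _ = (1 - Fintype.card S * δ) * ∑ s : S, |v s| := by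
        rw [← Finset.sum_mul, mul_comm]

lemma aux_ergodic (hQ0 : ∀ s s' : S, s ≠ s' → 0 ≤ Q s s')
    (hQrow : ∀ s : S, ∑ s' : S, Q s s' = 0)
    (hirr : ∀ s s' : S, ∃ t : ℝ, 0 < t ∧ 0 < exp (t • Q) s s')
    {μ : S → ℝ} (hμstat : Matrix.vecMul μ Q = 0)
    {ρ : S → ℝ} (hsum : ∑ s : S, ρ s = ∑ s : S, μ s) (s : S) :
    Filter.Tendsto (fun t : ℝ => Matrix.vecMul ρ (exp (t • Q)) s)
      Filter.atTop (nhds (μ s)) := by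
  obtain ⟨T, hT0, hTpos⟩ := aux_global_time hQ0 hirr
  set P : Matrix S S ℝ := exp (T • Q) with hPdef
  have hneSS : (Finset.univ : Finset (S × S)).Nonempty := Finset.univ_nonempty
  set δ : ℝ := Finset.univ.inf' hneSS (fun p : S × S => P p.1 p.2) with hδdef
  have hδpos : 0 < δ := by
    rw [hδdef, Finset.lt_inf'_iff]
    exact fun p _ => hTpos p.1 p.2
  have hPentry : ∀ u u' : S, δ ≤ P u u' := fun u u' =>
    Finset.inf'_le (f := fun p : S × S => P p.1 p.2) (Finset.mem_univ (u, u'))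
  have hProw : ∀ u : S, ∑ u' : S, P u u' = 1 := fun u => aux_exp_rowsum hQrow T u
  set v : S → ℝ := ρ - μ with hvdef
  have hv : ∑ u : S, v u = 0 := by
    simp only [hvdef, Pi.sub_apply, Finset.sum_sub_distrib, hsum, sub_self]
  set θ : ℝ := 1 - Fintype.card S * δ with hθdef
  have hθ0 : 0 ≤ θ := by
    obtain ⟨s₀⟩ := (inferInstance : Nonempty S)
    have h1 : ∑ u' : S, (P s₀ u' - δ) = θ := by
      rw [Finset.sum_sub_distrib, hProw s₀]
      simp [hθdef, Finset.card_univ, mul_comm]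
    have h2 : 0 ≤ ∑ u' : S, (P s₀ u' - δ) :=
      Finset.sum_nonneg fun u' _ => by linarith [hPentry s₀ u']
    linarith
  have hθ1 : θ < 1 := by
    have : (0:ℝ) < Fintype.card S := by
      exact_mod_cast Fintype.card_pos
    have : (0:ℝ) < Fintype.card S * δ := mul_pos this hδpos
    simp only [hθdef]
    linarith
  set C : ℝ := ∑ u : S, |v u| with hCdef
  set w : ℕ → (S → ℝ) := fun k => Matrix.vecMul v (exp ((k * T) • Q)) with hwdef
  have hwrec : ∀ k : ℕ, w (k + 1) = Matrix.vecMul (w k) P := by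
    intro k
    have : ((k + 1 : ℕ) * T : ℝ) = (k * T) + T := by push_cast; ring
    rw [hwdef]
    simp only
    rw [this, aux_exp_add, ← Matrix.vecMul_vecMul]
  have hwkey : ∀ k : ℕ, (∑ u : S, w k u = 0) ∧ (∑ u : S, |w k u| ≤ θ ^ k * C) := by
    intro k
    induction k with
    | zero =>
      constructor
      · simp only [hwdef, Nat.cast_zero, zero_mul, zero_smul, NormedSpace.exp_zero,
          Matrix.vecMul_one]
        exact hv
      · simp only [hwdef, Nat.cast_zero, zero_mul, zero_smul, NormedSpace.exp_zero,
          Matrix.vecMul_one, pow_zero, one_mul, hCdef, le_refl]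
    | succ k ih =>
      rw [hwrec k]
      constructor
      · exact aux_contract_sum hProw ih.1
      · calc ∑ u : S, |Matrix.vecMul (w k) P u| ≤ θ * ∑ u : S, |w k u| :=
              aux_contract hδpos hPentry hProw ih.1
          _ ≤ θ * (θ ^ k * C) := by
              exact mul_le_mul_of_nonneg_left ih.2 hθ0
          _ = θ ^ (k + 1) * C := by ring
  have hbound : ∀ k : ℕ, ∀ t : ℝ, (k * T : ℝ) ≤ t →
      |Matrix.vecMul v (exp (t • Q)) s| ≤ θ ^ k * C := by
    intro k t hkt
    have hkT0 : (0:ℝ) ≤ k * T := by positivity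
    have ht0 : 0 ≤ t - k * T := by linarith
    have hsplit : exp (t • Q) = exp ((k * T) • Q) * exp ((t - k * T) • Q) := by
      rw [← aux_exp_add]
      congr 1
      ring_nf
    have hE0 := (aux_exp_entries hQ0 ht0).1
    have hE1 := fun u u' => aux_exp_le_one hQ0 hQrow ht0 u u'
    rw [hsplit, ← Matrix.vecMul_vecMul]
    calc |Matrix.vecMul (w k) (exp ((t - k * T) • Q)) s|
        ≤ ∑ u : S, |w k u * exp ((t - k * T) • Q) u s| := by
          exact Finset.abs_sum_le_sum_abs _ _
      _ ≤ ∑ u : S, |w k u| := by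
          refine Finset.sum_le_sum fun u _ => ?_
          rw [abs_mul]
          have h1 : |exp ((t - k * T) • Q) u s| ≤ 1 := by
            rw [abs_of_nonneg (hE0 u s)]
            exact hE1 u s
          calc |w k u| * |exp ((t - k * T) • Q) u s| ≤ |w k u| * 1 :=
                mul_le_mul_of_nonneg_left h1 (abs_nonneg _)
            _ = |w k u| := mul_one _
      _ ≤ θ ^ k * C := (hwkey k).2
  have hμfix : ∀ t : ℝ, Matrix.vecMul μ (exp (t • Q)) = μ :=
    fun t => aux_vecMul_exp_stat hμstat t
  have hdiff : ∀ t : ℝ, Matrix.vecMul ρ (exp (t • Q)) s - μ s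
      = Matrix.vecMul v (exp (t • Q)) s := by
    intro t
    have := Matrix.sub_vecMul (exp (t • Q)) ρ μ
    rw [← hvdef] at this
    rw [this, hμfix t]
    simp
  rw [Metric.tendsto_atTop]
  intro ε hε
  have hlim : Filter.Tendsto (fun k : ℕ => θ ^ k * C) Filter.atTop (nhds 0) := by
    have := tendsto_pow_atTop_nhds_zero_of_lt_one hθ0 hθ1
    simpa using this.mul_const C
  obtain ⟨k, hk⟩ := (hlim.eventually (gt_mem_nhds hε)).exists
  refine ⟨k * T, fun t ht => ?_⟩
  rw [Real.dist_eq, hdiff t]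
  exact lt_of_le_of_lt (hbound k t ht) hk

end gen

theorem stmt_17 {S : Type*} [Fintype S] [DecidableEq S] [Nonempty S]
    {m : ℕ} (A : Fin m → Finset S)
    (hpart : ∀ s : S, ∃! i : Fin m, s ∈ A i)
    (hne : ∀ i, (A i).Nonempty)
    (Q : Matrix S S ℝ)
    (hQ0 : ∀ s s' : S, s ≠ s' → 0 ≤ Q s s')
    (hQrow : ∀ s : S, ∑ s' : S, Q s s' = 0)
    (α : Fin m → S → ℝ)
    (hα0 : ∀ i, ∀ s : S, s ∉ A i → α i s = 0)
    (hαpos : ∀ i, ∀ s ∈ A i, 0 < α i s)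
    (hα1 : ∀ i, ∑ s ∈ A i, α i s = 1)
    (Qt : Matrix (Fin m) (Fin m) ℝ)
    (hQt : ∀ i j : Fin m, ∀ s ∈ A j,
      Qt i j = (∑ s' ∈ A i, α i s' * Q s' s) / α j s)
    (hirr : ∀ s s' : S, ∃ t : ℝ, 0 < t ∧ 0 < NormedSpace.exp (t • Q) s s')
    (μ : S → ℝ) (hμ0 : ∀ s : S, 0 ≤ μ s) (hμ1 : ∑ s : S, μ s = 1)
    (hμstat : Matrix.vecMul μ Q = 0)
    (π : S → ℝ) (hπ0 : ∀ s : S, 0 ≤ π s) (hπ1 : ∑ s : S, π s = 1) :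
    Matrix.vecMul (fun i => ∑ s ∈ A i, μ s) Qt = 0 ∧
      (∀ i : Fin m,
        Filter.Tendsto (fun t : ℝ =>
          Matrix.vecMul (fun i' => ∑ s ∈ A i', π s) (NormedSpace.exp (t • Qt)) i
            - ∑ s ∈ A i, Matrix.vecMul π (NormedSpace.exp (t • Q)) s)
          Filter.atTop (nhds 0)) ∧
      (∀ i : Fin m, ∀ s ∈ A i,
        Filter.Tendsto (fun t : ℝ =>
          Matrix.vecMul π (NormedSpace.exp (t • Q)) s
            / Matrix.vecMul (fun i' => ∑ s' ∈ A i', π s') (NormedSpace.exp (t • Qt)) i)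
          Filter.atTop (nhds (α i s))) := by
  classical
  -- index function
  choose idx hmem huniq using hpart
  have hdisj : ∀ {s : S} {i j : Fin m}, s ∈ A i → s ∈ A j → i = j := by
    intro s i j hi hj
    rw [huniq s i hi, huniq s j hj]
  have hα0' : ∀ (j : Fin m) (i : Fin m) (s : S), s ∈ A i → j ≠ i → α j s = 0 := by
    intro j i s hs hne'
    exact hα0 j s (fun h => hne' (hdisj h hs))
  -- partition sum
  have hpartsum : ∀ f : S → ℝ, ∑ i : Fin m, ∑ s ∈ A i, f s = ∑ s : S, f s := by
    intro f
    have hbu : Finset.univ.biUnion A = Finset.univ := by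
      ext s
      simp only [Finset.mem_biUnion, Finset.mem_univ, true_and, iff_true]
      exact ⟨idx s, hmem s⟩
    rw [← hbu, Finset.sum_biUnion]
    intro i _ j _ hij
    simp only [Function.onFun]
    rw [Finset.disjoint_left]
    intro s hsi hsj
    exact hij (hdisj hsi hsj)
  set V : Matrix (Fin m) S ℝ := Matrix.of (fun i s => α i s) with hV
  have hsumα : ∀ (j : Fin m), ∑ s : S, α j s = 1 := by
    intro j
    rw [← hα1 j]
    refine (Finset.sum_subset (Finset.subset_univ (A j)) ?_).symm
    intro s _ hs
    exact hα0 j s hs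
  have hQtV : Qt * V = V * Q := by
    ext i s
    have hs : s ∈ A (idx s) := hmem s
    have hαs : α (idx s) s ≠ 0 := (hαpos (idx s) s hs).ne'
    have hlhs : (Qt * V) i s = Qt i (idx s) * α (idx s) s := by
      rw [Matrix.mul_apply]
      refine Finset.sum_eq_single (idx s) (fun j _ hj => ?_) (fun h => absurd (Finset.mem_univ _) h)
      rw [hV]
      simp only [Matrix.of_apply]
      rw [hα0' j (idx s) s hs hj, mul_zero]
    have hrhs : (V * Q) i s = ∑ s' ∈ A i, α i s' * Q s' s := by
      rw [Matrix.mul_apply]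
      refine (Finset.sum_subset (Finset.subset_univ (A i)) ?_).symm
      intro s' _ hs'
      rw [hV]
      simp only [Matrix.of_apply]
      rw [hα0 i s' hs', zero_mul]
    rw [hlhs, hrhs, hQt i (idx s) s hs, div_mul_cancel₀ _ hαs]
  have hVE : ∀ t : ℝ, exp (t • Qt) * V = V * exp (t • Q) := by
    intro t
    refine aux_intertwine _ _ V ?_
    rw [Matrix.smul_mul, Matrix.mul_smul, hQtV]
  -- key aggregation identity
  have key : ∀ (ρt : Fin m → ℝ) (t : ℝ) (i : Fin m),
      Matrix.vecMul ρt (exp (t • Qt)) i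
        = ∑ s ∈ A i, Matrix.vecMul (Matrix.vecMul ρt V) (exp (t • Q)) s := by
    intro ρt t i
    have h1 : Matrix.vecMul (Matrix.vecMul ρt V) (exp (t • Q))
        = Matrix.vecMul (Matrix.vecMul ρt (exp (t • Qt))) V := by
      rw [Matrix.vecMul_vecMul, Matrix.vecMul_vecMul, hVE t]
    rw [h1]
    set g : Fin m → ℝ := Matrix.vecMul ρt (exp (t • Qt)) with hg
    have h2 : ∀ s : S, Matrix.vecMul g V s = ∑ j : Fin m, g j * α j s := by
      intro s
      simp [Matrix.vecMul, dotProduct, hV]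
    rw [Finset.sum_congr rfl fun s _ => h2 s, Finset.sum_comm]
    rw [Finset.sum_eq_single i]
    · rw [← Finset.mul_sum, hα1 i, mul_one]
    · intro j _ hj
      have : ∀ s ∈ A i, g j * α j s = 0 := by
        intro s hs
        rw [hα0' j i s hs hj, mul_zero]
      rw [Finset.sum_congr rfl this]
      simp
    · intro h; exact absurd (Finset.mem_univ _) h
  -- lifted distributions on S
  have hsum_lift : ∀ ρ : S → ℝ, (∑ s : S, Matrix.vecMul (fun i => ∑ s ∈ A i, ρ s) V s)
      = ∑ s : S, ρ s := by
    intro ρ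
    have : ∀ s : S, Matrix.vecMul (fun i => ∑ s' ∈ A i, ρ s') V s
        = ∑ j : Fin m, (∑ s' ∈ A j, ρ s') * α j s := by
      intro s
      simp [Matrix.vecMul, dotProduct, hV]
    rw [Finset.sum_congr rfl fun s _ => this s, Finset.sum_comm]
    have : ∀ j : Fin m, ∑ s : S, (∑ s' ∈ A j, ρ s') * α j s = ∑ s' ∈ A j, ρ s' := by
      intro j
      rw [← Finset.mul_sum, hsumα j, mul_one]
    rw [Finset.sum_congr rfl fun j _ => this j, hpartsum]
  -- ergodic limits
  have herg : ∀ (ρ : S → ℝ), (∑ s : S, ρ s = 1) → ∀ s : S,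
      Filter.Tendsto (fun t : ℝ => Matrix.vecMul ρ (exp (t • Q)) s)
        Filter.atTop (nhds (μ s)) := by
    intro ρ hρ1 s
    exact aux_ergodic hQ0 hQrow hirr hμstat (by rw [hρ1, hμ1]) s
  set μt : Fin m → ℝ := fun i => ∑ s ∈ A i, μ s with hμt
  set πt : Fin m → ℝ := fun i => ∑ s ∈ A i, π s with hπt
  have hμ'1 : ∑ s : S, Matrix.vecMul μt V s = 1 := by rw [hsum_lift μ, hμ1]
  have hπ'1 : ∑ s : S, Matrix.vecMul πt V s = 1 := by rw [hsum_lift π, hπ1]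
  -- tendsto of lumped chain entries
  have hlump : ∀ (ρt' : Fin m → ℝ), (∑ s : S, Matrix.vecMul ρt' V s = 1) → ∀ i : Fin m,
      Filter.Tendsto (fun t : ℝ => Matrix.vecMul ρt' (exp (t • Qt)) i)
        Filter.atTop (nhds (μt i)) := by
    intro ρt' hρ'1 i
    have : (fun t : ℝ => Matrix.vecMul ρt' (exp (t • Qt)) i)
        = fun t : ℝ => ∑ s ∈ A i, Matrix.vecMul (Matrix.vecMul ρt' V) (exp (t • Q)) s := by
      funext t; exact key ρt' t i
    rw [this]
    exact tendsto_finset_sum _ (fun s _ => herg _ hρ'1 s)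
  -- consistency of μ : μ s = μt (idx s) * α (idx s) s
  have hμcons : ∀ s : S, μ s = ∑ j : Fin m, μt j * α j s := by
    intro s
    have hA : Filter.Tendsto (fun t : ℝ => Matrix.vecMul (Matrix.vecMul μt V) (exp (t • Q)) s)
        Filter.atTop (nhds (μ s)) := herg _ hμ'1 s
    have hB : Filter.Tendsto (fun t : ℝ => Matrix.vecMul (Matrix.vecMul μt V) (exp (t • Q)) s)
        Filter.atTop (nhds (∑ j : Fin m, μt j * α j s)) := by
      have heq : ∀ t : ℝ, Matrix.vecMul (Matrix.vecMul μt V) (exp (t • Q)) s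
          = ∑ j : Fin m, (Matrix.vecMul μt (exp (t • Qt)) j) * α j s := by
        intro t
        rw [Matrix.vecMul_vecMul, ← hVE t, ← Matrix.vecMul_vecMul]
        simp [Matrix.vecMul, dotProduct, hV]
      have : (fun t : ℝ => Matrix.vecMul (Matrix.vecMul μt V) (exp (t • Q)) s)
          = fun t : ℝ => ∑ j : Fin m, (Matrix.vecMul μt (exp (t • Qt)) j) * α j s := by
        funext t; exact heq t
      rw [this]
      exact tendsto_finset_sum _ (fun j _ => (hlump μt hμ'1 j).mul_const (α j s))
    exact tendsto_nhds_unique hA hB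
  have hμcons' : ∀ i : Fin m, ∀ s ∈ A i, μ s = μt i * α i s := by
    intro i s hs
    rw [hμcons s, Finset.sum_eq_single i]
    · intro j _ hj
      rw [hα0' j i s hs hj, mul_zero]
    · intro h; exact absurd (Finset.mem_univ _) h
  -- positivity of μ
  have hμpos : ∀ s : S, 0 < μ s := by
    obtain ⟨T, hT0, hTpos⟩ := aux_global_time hQ0 hirr
    have hs0 : ∃ s₀ : S, 0 < μ s₀ := by
      by_contra h
      push_neg at h
      have : ∑ s : S, μ s = 0 :=
        Finset.sum_eq_zero fun s _ => le_antisymm (h s) (hμ0 s)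
      rw [hμ1] at this
      exact one_ne_zero this
    obtain ⟨s₀, hs₀⟩ := hs0
    intro s
    have hfix : Matrix.vecMul μ (exp (T • Q)) s = μ s := by
      rw [aux_vecMul_exp_stat hμstat T]
    have hnn := (aux_exp_entries hQ0 hT0.le).1
    rw [← hfix]
    have hterm : 0 < μ s₀ * exp (T • Q) s₀ s := mul_pos hs₀ (hTpos s₀ s)
    calc (0:ℝ) < μ s₀ * exp (T • Q) s₀ s := hterm
      _ ≤ ∑ u : S, μ u * exp (T • Q) u s :=
          Finset.single_le_sum (fun u _ => mul_nonneg (hμ0 u) (hnn u s)) (Finset.mem_univ s₀)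
      _ = Matrix.vecMul μ (exp (T • Q)) s := by
          simp [Matrix.vecMul, dotProduct]
  have hμtpos : ∀ i : Fin m, 0 < μt i := by
    intro i
    exact Finset.sum_pos (fun s _ => hμpos s) (hne i)
  refine ⟨?_, ?_, ?_⟩
  -- conclusion 1
  · funext j
    obtain ⟨s, hs⟩ := hne j
    have hαs : α j s ≠ 0 := (hαpos j s hs).ne'
    have h1 : Matrix.vecMul μt Qt j = ∑ i : Fin m, μt i * ((∑ s' ∈ A i, α i s' * Q s' s) / α j s) := by
      simp only [Matrix.vecMul, dotProduct]
      exact Finset.sum_congr rfl fun i _ => by rw [hQt i j s hs]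
    have h2 : ∑ i : Fin m, μt i * ((∑ s' ∈ A i, α i s' * Q s' s) / α j s)
        = (∑ i : Fin m, ∑ s' ∈ A i, μ s' * Q s' s) / α j s := by
      rw [Finset.sum_div]
      refine Finset.sum_congr rfl fun i _ => ?_
      rw [← mul_div_assoc]
      congr 1
      rw [Finset.mul_sum]
      refine Finset.sum_congr rfl fun s' hs' => ?_
      rw [hμcons' i s' hs']
      ring
    have h3 : ∑ i : Fin m, ∑ s' ∈ A i, μ s' * Q s' s = 0 := by
      rw [hpartsum (fun s' => μ s' * Q s' s)]
      have := congrFun hμstat s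
      simpa [Matrix.vecMul, dotProduct] using this
    show Matrix.vecMul μt Qt j = 0
    rw [h1, h2, h3, zero_div]
  -- conclusion 2
  · intro i
    have h1 : Filter.Tendsto (fun t : ℝ => Matrix.vecMul πt (exp (t • Qt)) i)
        Filter.atTop (nhds (μt i)) := hlump πt hπ'1 i
    have h2 : Filter.Tendsto (fun t : ℝ => ∑ s ∈ A i, Matrix.vecMul π (exp (t • Q)) s)
        Filter.atTop (nhds (μt i)) := by
      have : μt i = ∑ s ∈ A i, μ s := rfl
      rw [this]
      exact tendsto_finset_sum _ (fun s _ => herg π hπ1 s)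
    have := h1.sub h2
    simpa using this
  -- conclusion 3
  · intro i s hs
    have hnum : Filter.Tendsto (fun t : ℝ => Matrix.vecMul π (exp (t • Q)) s)
        Filter.atTop (nhds (μ s)) := herg π hπ1 s
    have hden : Filter.Tendsto (fun t : ℝ => Matrix.vecMul πt (exp (t • Qt)) i)
        Filter.atTop (nhds (μt i)) := hlump πt hπ'1 i
    have hlim := hnum.div hden (hμtpos i).ne'
    have : μ s / μt i = α i s := by
      rw [hμcons' i s hs, mul_comm, mul_div_assoc, div_self (hμtpos i).ne', mul_one]
    rw [this] at hlim
    exact hlim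
end

section
/- (Composition of uniform aggregations) Let {A_1,…,A_M} and {B_1,…,B_N} be two partitions of S such that the first refines the second (each A_i is contained in some B_j). Let each A_i carry the uniform measure α_i(s) = 1/|A_i| and each B_j the uniform measure β_j(s) = 1/|B_j|, and assume both partitions satisfy condition (Cond2) for Q, with aggregated generator matrices Q₁ (on the A-classes) and Q₂ (on the B-classes). Define probability measures α'_j on the A-classes by α'_j(A_i) = |A_i|/|B_j| if A_i ⊆ B_j and 0 otherwise. Then for every j, j' and every A_{i'} ⊆ B_{j'}, (∑_{i : A_i ⊆ B_j} α'_j(A_i) Q₁(A_i, A_{i'})) / α'_{j'}(A_{i'}) = Q₂(B_j, B_{j'}); in particular this quantity does not depend on the choice of A_{i'} ⊆ B_{j'}, so the measures {α'_j} satisfy condition (Cond2) for Q₁ and the B-aggregated chain is an aggregation of the A-aggregated chain. -/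
open Finset Matrix Filter

theorem stmt_19 {S : Type*} [Fintype S] [DecidableEq S] [Nonempty S]
    {M N : ℕ} (A : Fin M → Finset S) (B : Fin N → Finset S)
    (hpartA : ∀ s : S, ∃! i : Fin M, s ∈ A i) (hneA : ∀ i, (A i).Nonempty)
    (hpartB : ∀ s : S, ∃! j : Fin N, s ∈ B j) (hneB : ∀ j, (B j).Nonempty)
    (hrefine : ∀ i : Fin M, ∃ j : Fin N, A i ⊆ B j)
    (Q : Matrix S S ℝ)
    (hQ0 : ∀ s s' : S, s ≠ s' → 0 ≤ Q s s')
    (hQrow : ∀ s : S, ∑ s' : S, Q s s' = 0)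
    (Q1 : Matrix (Fin M) (Fin M) ℝ)
    (hQ1 : ∀ i i' : Fin M, ∀ s ∈ A i',
      Q1 i i' = (((A i').card : ℝ) / ((A i).card : ℝ)) * ∑ s' ∈ A i, Q s' s)
    (Q2 : Matrix (Fin N) (Fin N) ℝ)
    (hQ2 : ∀ j j' : Fin N, ∀ s ∈ B j',
      Q2 j j' = (((B j').card : ℝ) / ((B j).card : ℝ)) * ∑ s' ∈ B j, Q s' s) :
    ∀ j j' : Fin N, ∀ i' : Fin M, A i' ⊆ B j' →
      (∑ i : Fin M, (if A i ⊆ B j then ((A i).card : ℝ) / ((B j).card : ℝ) else 0) * Q1 i i')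
        / (((A i').card : ℝ) / ((B j').card : ℝ)) = Q2 j j' := by
  intro j j' i' hsub
  obtain ⟨s, hs⟩ := hneA i'
  have hsB : s ∈ B j' := hsub hs
  -- cardinal positivity
  have hAne : ∀ i : Fin M, ((A i).card : ℝ) ≠ 0 := fun i =>
    Nat.cast_ne_zero.mpr (Finset.card_ne_zero_of_mem (hneA i).choose_spec)
  have hBne : ∀ k : Fin N, ((B k).card : ℝ) ≠ 0 := fun k =>
    Nat.cast_ne_zero.mpr (Finset.card_ne_zero_of_mem (hneB k).choose_spec)
  -- B j is the disjoint union of the A i contained in it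
  have hBeq : B j = (Finset.univ.filter (fun i => A i ⊆ B j)).biUnion A := by
    ext t
    simp only [Finset.mem_biUnion, Finset.mem_filter, Finset.mem_univ, true_and]
    constructor
    · intro ht
      obtain ⟨i, hi, _⟩ := hpartA t
      obtain ⟨k, hk⟩ := hrefine i
      have : k = j := by
        obtain ⟨j0, hj0, huniq⟩ := hpartB t
        rw [huniq k (hk hi), huniq j ht]
      exact ⟨i, this ▸ hk, hi⟩
    · rintro ⟨i, hiB, hti⟩
      exact hiB hti
  have hdisj : ∀ i1 ∈ Finset.univ.filter (fun i => A i ⊆ B j),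
      ∀ i2 ∈ Finset.univ.filter (fun i => A i ⊆ B j), i1 ≠ i2 →
      Disjoint (A i1) (A i2) := by
    intro i1 _ i2 _ hne
    refine Finset.disjoint_left.mpr fun t ht1 ht2 => ?_
    obtain ⟨i0, _, huniq⟩ := hpartA t
    exact hne ((huniq i1 ht1).trans (huniq i2 ht2).symm)
  have hsum : ∑ i : Fin M, (if A i ⊆ B j then ((A i).card : ℝ) / ((B j).card : ℝ) else 0) * Q1 i i'
      = (((A i').card : ℝ) / ((B j).card : ℝ)) * ∑ s' ∈ B j, Q s' s := by
    have step : ∀ i : Fin M,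
        (if A i ⊆ B j then ((A i).card : ℝ) / ((B j).card : ℝ) else 0) * Q1 i i'
        = if A i ⊆ B j then (((A i').card : ℝ) / ((B j).card : ℝ)) * ∑ s' ∈ A i, Q s' s else 0 := by
      intro i
      by_cases h : A i ⊆ B j
      · simp only [h, if_true]
        rw [hQ1 i i' s hs, ← mul_assoc, div_mul_div_comm,
          mul_comm ((B j).card : ℝ) ((A i).card : ℝ), mul_div_mul_left _ _ (hAne i)]
      · simp [h]
    rw [Finset.sum_congr rfl (fun i _ => step i), ← Finset.sum_filter,
      ← Finset.mul_sum, ← Finset.sum_biUnion hdisj, ← hBeq]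
  rw [hsum, hQ2 j j' s hsB]
  rw [div_eq_iff (div_ne_zero (hAne i') (hBne j'))]
  have := hAne i'; have := hBne j; have := hBne j'
  field_simp
end
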